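/- arXiv:nlin/0306040 — 4 statements merged into one kernel-verified Lean document; each statement's English description precedes it below -/
import Mathlib

section
/- (Fukś–Pivato particle representation.) Let Q = {0,…,q−1}, let f : Q^n → Q be conservative (f ∈ CA^0(q,n)), let 0 ≤ ℓ ≤ n−1, r = n−1−ℓ, and let F : Q^ℤ → Q^ℤ be the CA F(c)_i = f(c_{i−ℓ},…,c_{i+r}). Then there exists a conservative particle automaton G with states Q and neighborhood {−(ℓ+r),…,ℓ+r} whose global map equals F; moreover G can be chosen so that every displacement lies in {−r,…,ℓ}, i.e. every entry of every g_v on every context belongs to {−r,…,ℓ}. -/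
/-- A particle automaton (PA) with states `Q = {0,…,q−1}` and neighborhood
`N = {−L,…,R}`.  For each state `v` and each context
`(u, u') ∈ Q^L × Q^R` (the states of the `L` cells to the left and the `R` cells to the
right), `g v u u'` is a list of `v` values in `N ∪ {†}`, encoded as `Option ℤ` where
`none` is the vanishing symbol `†` and `some d` is a displacement `d ∈ {−L,…,R}`. -/
structure PA (q L R : ℕ) where
  g : (v : Fin q) → (Fin L → Fin q) → (Fin R → Fin q) → Fin (v : ℕ) → Option ℤ
  mem_range : ∀ v u u' k d, g v u u' k = some d → -(L : ℤ) ≤ d ∧ d ≤ (R : ℤ)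

namespace PA

variable {q L R : ℕ}

/-- `N(c,j,i)`: the number of particles sent from cell `j` to cell `i` in
configuration `c`. -/
def count (A : PA q L R) (c : ℤ → Fin q) (j i : ℤ) : ℕ :=
  (Finset.univ.filter fun k : Fin ((c j : ℕ)) =>
    A.g (c j) (fun t => c (j - (L : ℤ) + ((t : ℕ) : ℤ)))
      (fun t => c (j + 1 + ((t : ℕ) : ℤ))) k = some (i - j)).card

/-- The global map of the PA: `G(c)_i = min(q−1, ∑_{j∈ℤ} N(c,j,i))`. -/
noncomputable def glob [NeZero q] (A : PA q L R) (c : ℤ → Fin q) (i : ℤ) : Fin q :=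
  ⟨min (q - 1) (∑ᶠ j : ℤ, A.count c j i),
    lt_of_le_of_lt (Nat.min_le_left _ _)
      (by have := Nat.pos_of_ne_zero (NeZero.ne q); omega)⟩

/-- A PA is conservative if no entry of any `g_v` on any context is `†`, and the total
number of particles arriving at any cell is at most `q − 1` (no overflow). -/
def Conservative (A : PA q L R) : Prop :=
  (∀ v u u' k, A.g v u u' k ≠ none) ∧
  (∀ (c : ℤ → Fin q) (i : ℤ), (∑ᶠ j : ℤ, A.count c j i) ≤ q - 1)

end PA

/-- A local rule `f ∈ CA(q,n)` is conservative (`f ∈ CA^0(q,n)`). -/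
def Conserves (q n : ℕ) (f : (Fin n → Fin q) → Fin q) : Prop :=
  ∀ p : ℕ, 1 ≤ p → ∀ w : ℤ → Fin q, (∀ i : ℤ, w (i + (p : ℤ)) = w i) →
    ∑ k ∈ Finset.range p, ((f (fun t => w ((k : ℤ) + ((t : ℕ) : ℤ)))) : ℤ) =
    ∑ k ∈ Finset.range p, ((w (k : ℤ)) : ℤ)

namespace FP

open Finset

variable {q : ℕ} [NeZero q]

def fval {n : ℕ} (f : (Fin n → Fin q) → Fin q) (ℓ : ℕ) (x : ℤ → Fin q) (j : ℤ) : ℕ :=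
  (f (fun t => x (j - (ℓ : ℤ) + ((t : ℕ) : ℤ)))).val

lemma f_zero {n : ℕ} (f : (Fin n → Fin q) → Fin q) (hf : Conserves q n f) :
    (f (fun _ => 0)).val = 0 := by
  have := hf 1 le_rfl (fun _ => 0) (fun i => rfl)
  simp [Finset.sum_range_succ] at this
  exact_mod_cast this

lemma fval_congr {n ℓ r : ℕ} (hnlr : n = ℓ + r + 1) (f : (Fin n → Fin q) → Fin q)
    (x y : ℤ → Fin q) (j : ℤ)
    (h : ∀ t, j - ℓ ≤ t → t ≤ j + r → x t = y t) : fval f ℓ x j = fval f ℓ y j := by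
  unfold fval; congr 2; funext t
  exact h _ (by omega) (by have := t.isLt; omega)

lemma fval_out {n ℓ r : ℕ} (hnlr : n = ℓ + r + 1) (f : (Fin n → Fin q) → Fin q)
    (hf : Conserves q n f) (x : ℤ → Fin q) (a b : ℤ)
    (hx : ∀ t, t < a ∨ b < t → x t = 0) (j : ℤ) (hj : j < a - r ∨ b + ℓ < j) :
    fval f ℓ x j = 0 := by
  have : fval f ℓ x j = fval f ℓ (fun _ => 0) j := by
    apply fval_congr hnlr; intro t h1 h2
    apply hx; omega
  rw [this]; exact f_zero f hf

lemma sum_shift (h : ℤ → ℤ) (a b c : ℤ) :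
    ∑ t ∈ Icc (a + c) (b + c), h t = ∑ t ∈ Icc a b, h (t + c) := by
  rw [← Finset.map_add_right_Icc, Finset.sum_map]; rfl

lemma sum_shift' (h : ℤ → ℤ) (a b c : ℤ) :
    ∑ t ∈ Icc a b, h (c + t) = ∑ t ∈ Icc (a + c) (b + c), h t := by
  rw [sum_shift h a b c]
  apply Finset.sum_congr rfl
  intro t _
  rw [add_comm]

lemma periodic_sum_eq (P : ℕ) (h : ℤ → ℤ) (hh : ∀ t, h (t + P) = h t) :
    ∀ s : ℤ, ∑ t ∈ Icc s (s + P - 1), h t = ∑ k ∈ range P, h k := by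
  have base : ∀ Q : ℕ, ∑ t ∈ Icc (0:ℤ) ((Q:ℤ) - 1), h t = ∑ k ∈ range Q, h k := by
    intro Q; induction Q with
    | zero => simp
    | succ m ih =>
      have e : Icc (0:ℤ) ((m:ℤ)+1-1) = insert (m:ℤ) (Icc (0:ℤ) ((m:ℤ)-1)) := by
        ext t; simp [Finset.mem_Icc, Finset.mem_insert]; omega
      rw [Finset.sum_range_succ, ← ih]
      push_cast
      rw [e, Finset.sum_insert (by simp)]
      ring
  have step : ∀ s : ℤ, ∑ t ∈ Icc (s+1) (s+1+P-1), h t = ∑ t ∈ Icc s (s+P-1), h t := by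
    intro s
    by_cases hP : P = 0
    · simp [hP]
    have hP1 : 1 ≤ (P:ℤ) := by omega
    have e1 : Icc s (s+P-1) = insert s (Icc (s+1) (s+P-1)) := by ext t; simp [Finset.mem_Icc, Finset.mem_insert]; omega
    have e2 : Icc (s+1) (s+1+P-1) = insert (s+P) (Icc (s+1) (s+P-1)) := by ext t; simp [Finset.mem_Icc, Finset.mem_insert]; omega
    rw [e1, e2, Finset.sum_insert (by simp only [Finset.mem_Icc, not_and, not_le]; omega),
      Finset.sum_insert (by simp only [Finset.mem_Icc, not_and, not_le]; omega), hh s]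
  intro s
  induction s using Int.induction_on with
  | zero => simpa using base P
  | succ k ih => rw [step k]; exact ih
  | pred k ih =>
    have := step (-(k:ℤ) - 1)
    rw [show -(k:ℤ)-1+1 = -(k:ℤ) by ring] at this
    rw [this] at ih; exact ih

lemma conservation {n ℓ r : ℕ} (hnlr : n = ℓ + r + 1)
    (f : (Fin n → Fin q) → Fin q) (hf : Conserves q n f)
    (x : ℤ → Fin q) (a b : ℤ) (hab : a ≤ b) (hx : ∀ t, t < a ∨ b < t → x t = 0) :
    ∑ j ∈ Icc (a - r) (b + ℓ), (fval f ℓ x j : ℤ) = ∑ t ∈ Icc a b, ((x t : ℕ) : ℤ) := by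
  set P : ℕ := (b - a).toNat + ℓ + r + n + 1 with hPdef
  have hPz : (P:ℤ) = b - a + ℓ + r + n + 1 := by
    have : ((b-a).toNat : ℤ) = b - a := by omega
    push_cast [hPdef]; omega
  set s : ℤ := a - r - n with hsdef
  set w : ℤ → Fin q := fun t => x (s + (t - s) % P) with hwdef
  have hPpos : 0 < (P:ℤ) := by omega
  have hw : ∀ t : ℤ, w (t + P) = w t := by
    intro t; simp only [hwdef]
    congr 2
    rw [show t + (P:ℤ) - s = (t - s) + P by ring]
    simp [Int.add_emod]
  have hwx : ∀ t : ℤ, s ≤ t → t ≤ s + P - 1 → w t = x t := by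
    intro t h1 h2
    simp only [hwdef]
    rw [Int.emod_eq_of_lt (by omega) (by omega)]
    congr 1; ring
  have hw2 : ∀ t : ℤ, s + P ≤ t → t ≤ s + 2*P - 1 → w t = x (t - P) := by
    intro t h1 h2
    simp only [hwdef]
    rw [show t - s = (t - s - P) + P by ring,
      show ((t - s - P) + (P:ℤ)) % P = (t - s - P) % P by simp [Int.add_emod],
      Int.emod_eq_of_lt (by omega) (by omega)]
    congr 1; ring
  have hmain := hf P (by omega) w hw
  have L1 := periodic_sum_eq P (fun t => ((f (fun u => w (t + ((u:ℕ):ℤ)))) : ℤ))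
    (by
      intro t
      have e : (fun u : Fin n => w (t + (P:ℤ) + ((u:ℕ):ℤ))) = fun u : Fin n => w (t + ((u:ℕ):ℤ)) := by
        funext u
        rw [show t + (P:ℤ) + ((u:ℕ):ℤ) = (t + ((u:ℕ):ℤ)) + P by ring, hw]
      simp only [e]) s
  have L2 := periodic_sum_eq P (fun t => ((w t : ℕ) : ℤ))
    (by intro t; simp only [hw]) s
  -- identify coercions in hmain with those in L1/L2
  rw [← L1, ← L2] at hmain
  -- now replace w by x inside the block
  have hblock1 : ∀ t ∈ Icc s (s + P - 1),
      ((f (fun u => w (t + ((u:ℕ):ℤ)))) : ℤ) = (fval f ℓ x (t + ℓ) : ℤ) := by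
    intro t ht
    simp only [Finset.mem_Icc] at ht
    unfold fval
    have : (fun u : Fin n => w (t + ((u:ℕ):ℤ))) = (fun u : Fin n => x (t + ℓ - (ℓ:ℤ) + ((u:ℕ):ℤ))) := by
      funext u
      have hu : ((u:ℕ):ℤ) ≤ n - 1 := by have := u.isLt; omega
      have hu0 : 0 ≤ ((u:ℕ):ℤ) := by positivity
      rw [show t + (ℓ:ℤ) - (ℓ:ℤ) + ((u:ℕ):ℤ) = t + ((u:ℕ):ℤ) by ring]
      by_cases hc : t + ((u:ℕ):ℤ) ≤ s + P - 1
      · exact hwx _ (by omega) hc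
      · rw [hw2 _ (by omega) (by omega), hx _ (by omega), hx _ (by omega)]
    rw [this]
  have hblock2 : ∀ t ∈ Icc s (s + P - 1), ((w t : ℕ) : ℤ) = ((x t : ℕ) : ℤ) := by
    intro t ht; simp only [Finset.mem_Icc] at ht; rw [hwx t ht.1 ht.2]
  rw [Finset.sum_congr rfl hblock1, Finset.sum_congr rfl hblock2] at hmain
  -- reindex the fval sum
  have L3 : ∑ t ∈ Icc s (s + P - 1), (fval f ℓ x (t + ℓ) : ℤ)
      = ∑ j ∈ Icc (s + ℓ) (s + P - 1 + ℓ), (fval f ℓ x j : ℤ) := by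
    rw [sum_shift (fun j => (fval f ℓ x j : ℤ)) s (s + P - 1) ℓ]
  rw [L3] at hmain
  -- trim both sides
  have trim1 : ∑ j ∈ Icc (s + ℓ) (s + P - 1 + ℓ), (fval f ℓ x j : ℤ)
      = ∑ j ∈ Icc (a - r) (b + ℓ), (fval f ℓ x j : ℤ) := by
    symm
    apply Finset.sum_subset
    · intro j hj; simp only [Finset.mem_Icc] at *; omega
    · intro j hj hj2
      simp only [Finset.mem_Icc] at hj hj2
      rw [fval_out hnlr f hf x a b hx j (by omega)]; rfl
  have trim2 : ∑ t ∈ Icc s (s + P - 1), ((x t : ℕ) : ℤ) = ∑ t ∈ Icc a b, ((x t : ℕ) : ℤ) := by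
    symm
    apply Finset.sum_subset
    · intro t ht; simp only [Finset.mem_Icc] at *; omega
    · intro t ht ht2
      simp only [Finset.mem_Icc] at ht ht2
      rw [hx t (by omega)]; simp
  rw [trim1, trim2] at hmain
  exact hmain

end FP


-- ===== Part B =====
namespace FP
open Finset
variable {q : ℕ} [NeZero q]

lemma sum_Icc_split (h : ℤ → ℤ) (a m b : ℤ) (h1 : a - 1 ≤ m) (h2 : m ≤ b) :
    ∑ t ∈ Icc a b, h t = (∑ t ∈ Icc a m, h t) + ∑ t ∈ Icc (m+1) b, h t := by
  rw [← Finset.sum_union]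
  · congr 1; ext t; simp only [Finset.mem_Icc, Finset.mem_union]; omega
  · rw [Finset.disjoint_left]; intro t ht ht2
    simp only [Finset.mem_Icc] at ht ht2; omega

noncomputable def Tm (x : ℤ → Fin q) (a m : ℤ) : ℤ := ∑ t ∈ Icc a m, ((x t : ℕ) : ℤ)

noncomputable def Tf {n : ℕ} (f : (Fin n → Fin q) → Fin q) (ℓ r : ℕ) (x : ℤ → Fin q) (a m : ℤ) : ℤ :=
  ∑ j ∈ Icc (a - (r:ℤ)) m, (fval f ℓ x j : ℤ)

def trc (x : ℤ → Fin q) (A B : ℤ) : ℤ → Fin q := fun t => if A ≤ t ∧ t ≤ B then x t else 0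

lemma trc_eq (x : ℤ → Fin q) (A B t : ℤ) (h1 : A ≤ t) (h2 : t ≤ B) : trc x A B t = x t :=
  if_pos ⟨h1, h2⟩

lemma trc_zero (x : ℤ → Fin q) (A B t : ℤ) (h : t < A ∨ B < t) : trc x A B t = 0 :=
  if_neg (by omega)

noncomputable def Svals {n : ℕ} (f : (Fin n → Fin q) → Fin q) (ℓ r : ℕ) (x : ℤ → Fin q) (i : ℤ) : ℤ :=
  (∑ j ∈ Icc (i - (ℓ:ℤ) - (r:ℤ) + 1) i, (fval f ℓ (trc x (i - (ℓ:ℤ) + 1) (i + (r:ℤ))) j : ℤ))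
    - ∑ t ∈ Icc (i - (ℓ:ℤ) + 1) i, ((x t : ℕ) : ℤ)

noncomputable def Srel (ℓ : ℕ) (x : ℤ → Fin q) (j δ : ℤ) : ℤ :=
  (∑ t ∈ Icc j (j + (ℓ:ℤ)), ((x t : ℕ) : ℤ)) - ∑ t ∈ Icc (j + δ + 1) (j + (ℓ:ℤ)), ((x t : ℕ) : ℤ)

noncomputable def dd {n : ℕ} (f : (Fin n → Fin q) → Fin q) (ℓ r : ℕ) (x : ℤ → Fin q) (j : ℤ) (k : ℕ) : ℤ :=
  if h : (((Finset.Icc (-(r:ℤ)) (ℓ:ℤ))).filter fun δ =>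
      (k:ℤ) + 1 ≤ Svals f ℓ r x (j + δ) + Srel ℓ x j δ).Nonempty then
    (((Finset.Icc (-(r:ℤ)) (ℓ:ℤ))).filter fun δ =>
      (k:ℤ) + 1 ≤ Svals f ℓ r x (j + δ) + Srel ℓ x j δ).min' h
  else (ℓ:ℤ)

lemma dd_mem {n : ℕ} (f : (Fin n → Fin q) → Fin q) (ℓ r : ℕ) (x : ℤ → Fin q) (j : ℤ) (k : ℕ) :
    -(r:ℤ) ≤ dd f ℓ r x j k ∧ dd f ℓ r x j k ≤ (ℓ:ℤ) := by
  unfold dd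
  split
  · next h =>
    have := Finset.min'_mem _ h
    rw [Finset.mem_filter, Finset.mem_Icc] at this
    exact this.1
  · constructor
    · have : (0:ℤ) ≤ r := by positivity
      omega
    · exact le_refl _

section Main
variable {n ℓ r : ℕ} (hnlr : n = ℓ + r + 1)
  (f : (Fin n → Fin q) → Fin q) (hf : Conserves q n f)
  (x : ℤ → Fin q) (a b : ℤ) (hx : ∀ t, t < a ∨ b < t → x t = 0)

include hnlr hf hx

lemma Tf_formula (i : ℤ) (h1 : a + (ℓ:ℤ) + r + n + 2 ≤ i) (h2 : i + (ℓ:ℤ) + r + n + 2 ≤ b) :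
    Tf f ℓ r x a i = Tm x a (i - ℓ)
      + ∑ j ∈ Icc (i - (ℓ:ℤ) - r + 1) i, (fval f ℓ (trc x (i - (ℓ:ℤ) + 1) b) j : ℤ) := by
  have hab : a ≤ b := by omega
  have cons1 := conservation hnlr f hf x a b hab hx
  have sp1 := sum_Icc_split (fun j => (fval f ℓ x j : ℤ)) (a - r) i (b + ℓ) (by omega) (by omega)
  set e1 := trc x (i - (ℓ:ℤ) + 1) b with he1def
  have he1 : ∀ t, t < i - (ℓ:ℤ) + 1 ∨ b < t → e1 t = 0 := fun t ht => trc_zero x _ _ t (by omega)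
  have hagree : ∀ j ∈ Icc (i+1) (b + (ℓ:ℤ)), (fval f ℓ x j : ℤ) = (fval f ℓ e1 j : ℤ) := by
    intro j hj
    rw [Finset.mem_Icc] at hj
    congr 1
    apply fval_congr hnlr
    intro t ht1 ht2
    by_cases hc : t ≤ b
    · rw [he1def, trc_eq x _ _ t (by omega) hc]
    · rw [hx t (by omega), he1 t (by omega)]
  have cons2 := conservation hnlr f hf e1 (i - (ℓ:ℤ) + 1) b (by omega) he1
  have sp2 := sum_Icc_split (fun j => (fval f ℓ e1 j : ℤ)) (i - (ℓ:ℤ) + 1 - r) i (b + ℓ) (by omega) (by omega)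
  have sp3 := sum_Icc_split (fun t => ((x t : ℕ) : ℤ)) a (i - ℓ) b (by omega) (by omega)
  have hsum2 : ∑ t ∈ Icc (i - (ℓ:ℤ) + 1) b, ((e1 t : ℕ) : ℤ) = ∑ t ∈ Icc (i - (ℓ:ℤ) + 1) b, ((x t : ℕ) : ℤ) := by
    apply Finset.sum_congr rfl
    intro t ht; rw [Finset.mem_Icc] at ht
    rw [he1def, trc_eq x _ _ t ht.1 ht.2]
  have hagree' : ∑ j ∈ Icc (i+1) (b + (ℓ:ℤ)), (fval f ℓ x j : ℤ)
      = ∑ j ∈ Icc (i+1) (b + (ℓ:ℤ)), (fval f ℓ e1 j : ℤ) := Finset.sum_congr rfl hagree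
  have hre : (i - (ℓ:ℤ) + 1 - r) = (i - (ℓ:ℤ) - r + 1) := by ring
  rw [hre] at cons2
  rw [hre] at sp2
  unfold Tf Tm
  linarith [cons1, sp1, cons2, sp2, sp3, hsum2, hagree']

lemma Tm_le_Tf (i : ℤ) (h1 : a + (ℓ:ℤ) + r + n + 2 ≤ i) (h2 : i + (ℓ:ℤ) + r + n + 2 ≤ b) :
    Tm x a (i - ℓ) ≤ Tf f ℓ r x a i := by
  rw [Tf_formula hnlr f hf x a b hx i h1 h2]
  have : (0:ℤ) ≤ ∑ j ∈ Icc (i - (ℓ:ℤ) - r + 1) i, (fval f ℓ (trc x (i - (ℓ:ℤ) + 1) b) j : ℤ) :=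
    Finset.sum_nonneg (fun j _ => by positivity)
  linarith

lemma Tf_le_Tm (i : ℤ) (h1 : a + (ℓ:ℤ) + r + n + 2 ≤ i) (h2 : i + (ℓ:ℤ) + r + n + 2 ≤ b) :
    Tf f ℓ r x a i ≤ Tm x a (i + r) := by
  set e2 := trc x a (i + (r:ℤ)) with he2def
  have he2 : ∀ t, t < a ∨ i + (r:ℤ) < t → e2 t = 0 := fun t ht => trc_zero x _ _ t (by omega)
  have cons := conservation hnlr f hf e2 a (i + r) (by omega) he2
  have hagree : ∀ j ∈ Icc (a - (r:ℤ)) i, (fval f ℓ x j : ℤ) = (fval f ℓ e2 j : ℤ) := by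
    intro j hj
    rw [Finset.mem_Icc] at hj
    congr 1
    apply fval_congr hnlr
    intro t ht1 ht2
    by_cases hc : a ≤ t
    · rw [he2def, trc_eq x _ _ t hc (by omega)]
    · rw [hx t (by omega), he2 t (by omega)]
  have step1 : Tf f ℓ r x a i = ∑ j ∈ Icc (a - (r:ℤ)) i, (fval f ℓ e2 j : ℤ) := by
    unfold Tf; exact Finset.sum_congr rfl hagree
  have step2 : ∑ j ∈ Icc (a - (r:ℤ)) i, (fval f ℓ e2 j : ℤ)
      ≤ ∑ j ∈ Icc (a - (r:ℤ)) (i + r + ℓ), (fval f ℓ e2 j : ℤ) := by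
    apply Finset.sum_le_sum_of_subset_of_nonneg
    · apply Finset.Icc_subset_Icc_right; omega
    · intro j _ _; positivity
  have step3 : ∑ t ∈ Icc a (i + (r:ℤ)), ((e2 t : ℕ) : ℤ) = Tm x a (i + r) := by
    unfold Tm
    apply Finset.sum_congr rfl
    intro t ht; rw [Finset.mem_Icc] at ht
    rw [he2def, trc_eq x _ _ t ht.1 ht.2]
  rw [show (i + (r:ℤ)) + ℓ = i + r + ℓ by ring] at cons
  linarith

lemma Svals_eq (i : ℤ) (h1 : a + (ℓ:ℤ) + r + n + 2 ≤ i) (h2 : i + (ℓ:ℤ) + r + n + 2 ≤ b) :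
    Svals f ℓ r x i = Tf f ℓ r x a i - Tm x a i := by
  rw [Tf_formula hnlr f hf x a b hx i h1 h2]
  have hcong : ∑ j ∈ Icc (i - (ℓ:ℤ) - r + 1) i, (fval f ℓ (trc x (i - (ℓ:ℤ) + 1) (i + (r:ℤ))) j : ℤ)
      = ∑ j ∈ Icc (i - (ℓ:ℤ) - r + 1) i, (fval f ℓ (trc x (i - (ℓ:ℤ) + 1) b) j : ℤ) := by
    apply Finset.sum_congr rfl
    intro j hj; rw [Finset.mem_Icc] at hj
    congr 1
    apply fval_congr hnlr
    intro t ht1 ht2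
    unfold trc
    by_cases hc : i - (ℓ:ℤ) + 1 ≤ t
    · rw [if_pos ⟨hc, by omega⟩, if_pos ⟨hc, by omega⟩]
    · rw [if_neg (by omega), if_neg (by omega)]
  have sp := sum_Icc_split (fun t => ((x t : ℕ) : ℤ)) a (i - ℓ) i (by omega) (by omega)
  unfold Svals Tm
  rw [hcong]
  linarith

omit hnlr hf in
lemma Srel_eq (j δ : ℤ) (hδ1 : -(r:ℤ) - 1 ≤ δ) (hδ2 : δ ≤ (ℓ:ℤ)) (haj : a ≤ j - r - 1) :
    Srel ℓ x j δ = Tm x a (j + δ) - Tm x a (j - 1) := by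
  have s1 := sum_Icc_split (fun t => ((x t : ℕ) : ℤ)) a (j-1) (j+ℓ) (by omega) (by omega)
  have s2 := sum_Icc_split (fun t => ((x t : ℕ) : ℤ)) a (j+δ) (j+ℓ) (by omega) (by omega)
  rw [show (j-1) + 1 = j by ring] at s1
  unfold Srel Tm
  linarith

omit hnlr hf hx in
lemma Tm_succ (j : ℤ) (haj : a ≤ j) : Tm x a j = Tm x a (j-1) + ((x j : ℕ) : ℤ) := by
  have s := sum_Icc_split (fun t => ((x t : ℕ) : ℤ)) a (j-1) j (by omega) (by omega)
  rw [show (j-1) + 1 = j by ring] at s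
  unfold Tm
  rw [s, Finset.Icc_self, Finset.sum_singleton]

omit hnlr hf hx in
lemma Tf_mono (u v : ℤ) (huv : u ≤ v) : Tf f ℓ r x a u ≤ Tf f ℓ r x a v := by
  unfold Tf
  apply Finset.sum_le_sum_of_subset_of_nonneg
  · apply Finset.Icc_subset_Icc_right huv
  · intro j _ _; positivity

lemma dd_spec (j : ℤ) (k : ℕ)
    (h1 : a + 2*((ℓ:ℤ) + r + n + 2) ≤ j) (h2 : j + 2*((ℓ:ℤ) + r + n + 2) ≤ b)
    (hk : (k:ℤ) < ((x j : ℕ) : ℤ)) :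
    (-(r:ℤ) ≤ dd f ℓ r x j k ∧ dd f ℓ r x j k ≤ (ℓ:ℤ)) ∧
    Tf f ℓ r x a (j + dd f ℓ r x j k - 1) < Tm x a (j-1) + k + 1 ∧
    Tm x a (j-1) + k + 1 ≤ Tf f ℓ r x a (j + dd f ℓ r x j k) := by
  have hAv : ∀ δ : ℤ, -(r:ℤ) ≤ δ → δ ≤ (ℓ:ℤ) →
      Svals f ℓ r x (j + δ) + Srel ℓ x j δ = Tf f ℓ r x a (j + δ) - Tm x a (j - 1) := by
    intro δ hd1 hd2
    have m1 : a + (ℓ:ℤ) + r + n + 2 ≤ j + δ := by omega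
    have m2 : (j + δ) + (ℓ:ℤ) + r + n + 2 ≤ b := by omega
    rw [Svals_eq hnlr f hf x a b hx (j+δ) m1 m2,
      Srel_eq (r := r) x a b hx j δ (by omega) hd2 (by omega)]
    ring
  set s := (Finset.Icc (-(r:ℤ)) (ℓ:ℤ)).filter
    (fun δ => (k:ℤ) + 1 ≤ Svals f ℓ r x (j + δ) + Srel ℓ x j δ) with hs
  have hset : ∀ δ : ℤ, δ ∈ s ↔ (-(r:ℤ) ≤ δ ∧ δ ≤ (ℓ:ℤ)) ∧
      Tm x a (j-1) + k + 1 ≤ Tf f ℓ r x a (j + δ) := by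
    intro δ
    rw [hs, Finset.mem_filter, Finset.mem_Icc]
    constructor
    · rintro ⟨⟨m1, m2⟩, hle⟩
      rw [hAv δ m1 m2] at hle
      exact ⟨⟨m1, m2⟩, by linarith⟩
    · rintro ⟨⟨m1, m2⟩, hle⟩
      rw [hAv δ m1 m2]
      exact ⟨⟨m1, m2⟩, by linarith⟩
  have hl : (ℓ:ℤ) ∈ s := by
    apply (hset ((ℓ:ℤ))).mpr
    refine ⟨⟨by omega, le_refl _⟩, ?_⟩
    have e1 : Tm x a j = Tm x a (j-1) + ((x j : ℕ) : ℤ) := Tm_succ x a j (by omega)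
    have m1 : a + (ℓ:ℤ) + r + n + 2 ≤ j + ℓ := by omega
    have m2 : (j + (ℓ:ℤ)) + (ℓ:ℤ) + r + n + 2 ≤ b := by omega
    have e2 : Tm x a ((j + (ℓ:ℤ)) - ℓ) ≤ Tf f ℓ r x a (j + ℓ) :=
      Tm_le_Tf hnlr f hf x a b hx (j + ℓ) m1 m2
    rw [show (j + (ℓ:ℤ)) - ℓ = j by ring] at e2
    linarith
  have hne : s.Nonempty := ⟨_, hl⟩
  have hdd : dd f ℓ r x j k = s.min' hne := by
    unfold dd
    rw [← hs, dif_pos hne]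
  have hmem := Finset.min'_mem s hne
  rw [← hdd] at hmem
  rw [hset] at hmem
  refine ⟨hmem.1, ?_, hmem.2⟩
  by_cases hc : dd f ℓ r x j k = -(r:ℤ)
  · rw [hc]
    have m1 : a + (ℓ:ℤ) + r + n + 2 ≤ j - r - 1 := by omega
    have m2 : (j - (r:ℤ) - 1) + (ℓ:ℤ) + r + n + 2 ≤ b := by omega
    have e3 : Tf f ℓ r x a (j - r - 1) ≤ Tm x a ((j - (r:ℤ) - 1) + r) :=
      Tf_le_Tm hnlr f hf x a b hx (j - r - 1) m1 m2
    rw [show (j - (r:ℤ) - 1) + r = j - 1 by ring] at e3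
    have hk0 : (0:ℤ) ≤ k := by positivity
    rw [show j + -(r:ℤ) - 1 = j - r - 1 by ring]
    linarith
  · by_contra hcon
    push_neg at hcon
    have hd1 : dd f ℓ r x j k - 1 ∈ s := by
      rw [hset]
      have := hmem.1
      refine ⟨⟨by omega, by omega⟩, ?_⟩
      rw [show j + (dd f ℓ r x j k - 1) = j + dd f ℓ r x j k - 1 by ring]
      linarith
    have := Finset.min'_le s _ hd1
    rw [← hdd] at this
    omega

lemma dd_eq_iff (j : ℤ) (k : ℕ)
    (h1 : a + 2*((ℓ:ℤ) + r + n + 2) ≤ j) (h2 : j + 2*((ℓ:ℤ) + r + n + 2) ≤ b)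
    (hk : (k:ℤ) < ((x j : ℕ) : ℤ)) (δ₀ : ℤ) (hδ₀1 : -(r:ℤ) ≤ δ₀) (hδ₀2 : δ₀ ≤ (ℓ:ℤ)) :
    dd f ℓ r x j k = δ₀ ↔
      (Tf f ℓ r x a (j + δ₀ - 1) < Tm x a (j-1) + k + 1 ∧
       Tm x a (j-1) + k + 1 ≤ Tf f ℓ r x a (j + δ₀)) := by
  obtain ⟨⟨hm1, hm2⟩, hlt, hle⟩ := dd_spec hnlr f hf x a b hx j k h1 h2 hk
  constructor
  · intro h; rw [h] at hlt hle; exact ⟨hlt, hle⟩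
  · rintro ⟨hlt', hle'⟩
    by_contra hne
    rcases lt_or_gt_of_ne hne with hlt2 | hgt2
    · have : Tf f ℓ r x a (j + dd f ℓ r x j k) ≤ Tf f ℓ r x a (j + δ₀ - 1) :=
        Tf_mono f x a (j + dd f ℓ r x j k) (j + δ₀ - 1) (by omega)
      linarith
    · have : Tf f ℓ r x a (j + δ₀) ≤ Tf f ℓ r x a (j + dd f ℓ r x j k - 1) :=
        Tf_mono f x a (j + δ₀) (j + dd f ℓ r x j k - 1) (by omega)
      linarith

end Main


end FP

-- ===== Part C : congruence, shift, recon, telescoping =====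
namespace FP
open Finset
variable {q : ℕ} [NeZero q]

lemma trc_congr (x y : ℤ → Fin q) (A B : ℤ) (h : ∀ t, A ≤ t → t ≤ B → x t = y t) :
    trc x A B = trc y A B := by
  funext t; unfold trc; split
  · next ht => exact h t ht.1 ht.2
  · rfl

lemma Svals_congr {n ℓ r : ℕ} (f : (Fin n → Fin q) → Fin q) (x y : ℤ → Fin q) (i : ℤ)
    (h : ∀ t, i - (ℓ:ℤ) + 1 ≤ t → t ≤ i + (r:ℤ) → x t = y t) :
    Svals f ℓ r x i = Svals f ℓ r y i := by
  unfold Svals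
  rw [trc_congr x y _ _ h]
  congr 1
  apply Finset.sum_congr rfl
  intro t ht; rw [Finset.mem_Icc] at ht
  rw [h t (by omega) (by omega)]

lemma Srel_congr {ℓ r : ℕ} (x y : ℤ → Fin q) (j δ : ℤ) (hδ1 : -(r:ℤ) ≤ δ)
    (h : ∀ t, j - (r:ℤ) ≤ t → t ≤ j + (ℓ:ℤ) → x t = y t) :
    Srel ℓ x j δ = Srel ℓ y j δ := by
  unfold Srel
  congr 1
  · apply Finset.sum_congr rfl
    intro t ht; rw [Finset.mem_Icc] at ht
    rw [h t (by omega) (by omega)]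
  · apply Finset.sum_congr rfl
    intro t ht; rw [Finset.mem_Icc] at ht
    rw [h t (by omega) (by omega)]

lemma dd_congr {n ℓ r : ℕ} (f : (Fin n → Fin q) → Fin q) (x y : ℤ → Fin q) (j : ℤ) (k : ℕ)
    (h : ∀ t, j - ((ℓ:ℤ) + (r:ℤ)) ≤ t → t ≤ j + ((ℓ:ℤ) + (r:ℤ)) → x t = y t) :
    dd f ℓ r x j k = dd f ℓ r y j k := by
  unfold dd
  have hfil : ((Finset.Icc (-(r:ℤ)) (ℓ:ℤ))).filter
        (fun δ => (k:ℤ) + 1 ≤ Svals f ℓ r x (j + δ) + Srel ℓ x j δ)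
      = ((Finset.Icc (-(r:ℤ)) (ℓ:ℤ))).filter
        (fun δ => (k:ℤ) + 1 ≤ Svals f ℓ r y (j + δ) + Srel ℓ y j δ) := by
    apply Finset.filter_congr
    intro δ hδ; rw [Finset.mem_Icc] at hδ
    rw [Svals_congr f x y (j+δ) (fun t h1 h2 => h t (by omega) (by omega)),
      Srel_congr x y j δ hδ.1 (fun t h1 h2 => h t (by omega) (by omega))]
  simp only [hfil]

lemma fval_shift {n ℓ : ℕ} (f : (Fin n → Fin q) → Fin q) (x : ℤ → Fin q) (j j' : ℤ) :
    fval f ℓ (fun s => x (j + s)) j' = fval f ℓ x (j + j') := by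
  unfold fval
  have e : (fun t : Fin n => (fun s => x (j + s)) (j' - (ℓ:ℤ) + ((t:ℕ):ℤ)))
      = fun t : Fin n => x ((j + j') - (ℓ:ℤ) + ((t:ℕ):ℤ)) := by
    funext t; simp only []; congr 1; ring
  rw [e]

lemma Svals_shift {n ℓ r : ℕ} (f : (Fin n → Fin q) → Fin q) (x : ℤ → Fin q) (j i : ℤ) :
    Svals f ℓ r (fun s => x (j + s)) i = Svals f ℓ r x (j + i) := by
  unfold Svals
  have h1 : ∀ j' : ℤ, (fval f ℓ (trc (fun s => x (j + s)) (i - (ℓ:ℤ) + 1) (i + (r:ℤ))) j' : ℤ)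
      = (fval f ℓ (trc x (j + i - (ℓ:ℤ) + 1) (j + i + (r:ℤ))) (j + j') : ℤ) := by
    intro j'
    rw [← fval_shift f (trc x (j + i - (ℓ:ℤ) + 1) (j + i + (r:ℤ))) j j']
    congr 2
    funext t
    unfold trc
    refine if_congr (by omega) rfl rfl
  simp only []
  rw [Finset.sum_congr rfl (fun j' _ => h1 j')]
  rw [sum_shift' (fun j'' => (fval f ℓ (trc x (j + i - (ℓ:ℤ) + 1) (j + i + (r:ℤ))) j'' : ℤ))
    (i - (ℓ:ℤ) - (r:ℤ) + 1) i j]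
  rw [sum_shift' (fun t => ((x t : ℕ) : ℤ)) (i - (ℓ:ℤ) + 1) i j]
  rw [show (i - (ℓ:ℤ) - (r:ℤ) + 1) + j = j + i - (ℓ:ℤ) - (r:ℤ) + 1 by ring,
    show i + j = j + i by ring,
    show (i - (ℓ:ℤ) + 1) + j = j + i - (ℓ:ℤ) + 1 by ring]

lemma Srel_shift {ℓ : ℕ} (x : ℤ → Fin q) (j δ : ℤ) :
    Srel ℓ (fun s => x (j + s)) 0 δ = Srel ℓ x j δ := by
  unfold Srel
  simp only []
  rw [sum_shift' (fun t => ((x t : ℕ) : ℤ)) 0 ((0:ℤ) + (ℓ:ℤ)) j,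
    sum_shift' (fun t => ((x t : ℕ) : ℤ)) ((0:ℤ) + δ + 1) ((0:ℤ) + (ℓ:ℤ)) j,
    show (0:ℤ) + j = j by ring, show ((0:ℤ) + (ℓ:ℤ)) + j = j + (ℓ:ℤ) by ring,
    show ((0:ℤ) + δ + 1) + j = j + δ + 1 by ring]

lemma dd_shift {n ℓ r : ℕ} (f : (Fin n → Fin q) → Fin q) (x : ℤ → Fin q) (j : ℤ) (k : ℕ) :
    dd f ℓ r (fun s => x (j + s)) 0 k = dd f ℓ r x j k := by
  unfold dd
  have hfil : ((Finset.Icc (-(r:ℤ)) (ℓ:ℤ))).filter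
        (fun δ => (k:ℤ) + 1 ≤ Svals f ℓ r (fun s => x (j + s)) (0 + δ) + Srel ℓ (fun s => x (j + s)) 0 δ)
      = ((Finset.Icc (-(r:ℤ)) (ℓ:ℤ))).filter
        (fun δ => (k:ℤ) + 1 ≤ Svals f ℓ r x (j + δ) + Srel ℓ x j δ) := by
    apply Finset.filter_congr
    intro δ _
    rw [show (0:ℤ) + δ = δ by ring, Svals_shift f x j δ, Srel_shift x j δ]
  simp only [hfil]

def recon (L R : ℕ) (v : Fin q) (u : Fin L → Fin q) (u' : Fin R → Fin q) : ℤ → Fin q :=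
  fun s =>
    if s = 0 then v
    else if h1 : 0 < s ∧ s ≤ (R:ℤ) then u' ⟨(s-1).toNat, by omega⟩
    else if h2 : -(L:ℤ) ≤ s ∧ s < 0 then u ⟨(s+L).toNat, by omega⟩
    else 0

lemma recon_spec (L R : ℕ) (c : ℤ → Fin q) (j s : ℤ) (hs1 : -(L:ℤ) ≤ s) (hs2 : s ≤ (R:ℤ)) :
    recon L R (c j) (fun t => c (j - (L:ℤ) + ((t:ℕ):ℤ))) (fun t => c (j + 1 + ((t:ℕ):ℤ))) s
      = c (j + s) := by
  unfold recon
  split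
  · next h => rw [h]; norm_num
  · next h =>
    split
    · next h1 =>
      show c (j + 1 + (((s-1).toNat : ℕ) : ℤ)) = c (j + s)
      congr 1; omega
    · next h1 =>
      split
      · next h2 =>
        show c (j - (L:ℤ) + (((s+(L:ℤ)).toNat : ℕ) : ℤ)) = c (j + s)
        congr 1; omega
      · next h2 => exfalso; omega

lemma tele (S : Finset ℤ) (T : ℤ → ℤ) (hT : ∀ u v : ℤ, u ≤ v → T u ≤ T v) (j₀ : ℤ) :
    ∀ j₁ : ℤ, j₀ - 1 ≤ j₁ →
      ∑ j ∈ Finset.Icc j₀ j₁, (S ∩ Finset.Ioc (T (j-1)) (T j)).card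
        = (S ∩ Finset.Ioc (T (j₀-1)) (T j₁)).card := by
  intro j₁ h
  refine Int.le_induction
    (motive := fun v _ => ∑ j ∈ Finset.Icc j₀ v, (S ∩ Finset.Ioc (T (j-1)) (T j)).card
      = (S ∩ Finset.Ioc (T (j₀-1)) (T v)).card) ?_ ?_ j₁ h
  · show ∑ j ∈ Finset.Icc j₀ (j₀-1), (S ∩ Finset.Ioc (T (j-1)) (T j)).card
      = (S ∩ Finset.Ioc (T (j₀-1)) (T (j₀-1))).card
    have e : Finset.Icc j₀ (j₀ - 1) = ∅ := Finset.Icc_eq_empty (by omega)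
    rw [e, Finset.sum_empty, Finset.Ioc_self, Finset.inter_empty, Finset.card_empty]
  · intro m hm ih
    have e : Finset.Icc j₀ (m+1) = insert (m+1) (Finset.Icc j₀ m) := by
      ext t; simp only [Finset.mem_Icc, Finset.mem_insert]; omega
    rw [e, Finset.sum_insert (by simp only [Finset.mem_Icc, not_and, not_le]; omega), ih]
    have hu : Finset.Ioc (T (j₀-1)) (T m) ∪ Finset.Ioc (T m) (T (m+1)) = Finset.Ioc (T (j₀-1)) (T (m+1)) :=
      Finset.Ioc_union_Ioc_eq_Ioc (hT _ _ (by omega)) (hT _ _ (by omega))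
    rw [← hu, Finset.inter_union_distrib_left, Finset.card_union_of_disjoint]
    · rw [show m + 1 - 1 = m by ring]; ring
    · rw [Finset.disjoint_left]
      intro t ht1 ht2
      rw [Finset.mem_inter, Finset.mem_Ioc] at ht1 ht2
      omega

end FP


-- ===== Part D : final assembly =====
namespace FP
open Finset
variable {q : ℕ} [NeZero q]

lemma Tm_mono (x : ℤ → Fin q) (a u v : ℤ) (huv : u ≤ v) : Tm x a u ≤ Tm x a v := by
  unfold Tm
  apply Finset.sum_le_sum_of_subset_of_nonneg
  · exact Finset.Icc_subset_Icc_right huv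
  · intro t _ _; positivity

lemma Tf_succ {n ℓ r : ℕ} (f : (Fin n → Fin q) → Fin q) (x : ℤ → Fin q) (a i : ℤ)
    (h : a - (r:ℤ) ≤ i) : Tf f ℓ r x a i = Tf f ℓ r x a (i-1) + (fval f ℓ x i : ℤ) := by
  have s := sum_Icc_split (fun j => (fval f ℓ x j : ℤ)) (a - r) (i-1) i (by omega) (by omega)
  rw [show (i-1) + 1 = i by ring] at s
  unfold Tf
  rw [s, Finset.Icc_self, Finset.sum_singleton]

end FP


/-- Fukś–Pivato particle representation: every conservative CA, given
with offset `ℓ` (hence neighborhood `{−ℓ,…,r}` with `r = n−1−ℓ`), is the global map of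
a conservative particle automaton with neighborhood `{−(ℓ+r),…,ℓ+r}` all of whose
displacements lie in `{−r,…,ℓ}`. -/
theorem particle_representation_of_conservative
    (q n : ℕ) [NeZero q] (hn : 1 ≤ n)
    (f : (Fin n → Fin q) → Fin q) (hf : Conserves q n f)
    (ℓ : ℕ) (hℓ : ℓ ≤ n - 1)
    (F : (ℤ → Fin q) → ℤ → Fin q)
    (hF : ∀ (c : ℤ → Fin q) (i : ℤ),
      F c i = f (fun t => c (i - (ℓ : ℤ) + ((t : ℕ) : ℤ)))) :
    ∃ G : PA q (ℓ + (n - 1 - ℓ)) (ℓ + (n - 1 - ℓ)),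
      G.Conservative ∧
      (∀ (c : ℤ → Fin q) (i : ℤ), G.glob c i = F c i) ∧
      (∀ v u u' k d, G.g v u u' k = some d →
        -(((n - 1 - ℓ : ℕ)) : ℤ) ≤ d ∧ d ≤ (ℓ : ℤ)) := by
  classical
  set r : ℕ := n - 1 - ℓ with hrdef
  have hnlr : n = ℓ + r + 1 := by omega
  set L : ℕ := ℓ + r with hLdef
  set G : PA q L L := ⟨fun v u u' k => some (FP.dd f ℓ r (FP.recon L L v u u') 0 (k:ℕ)),
    by
      intro v u u' k d hd
      obtain ⟨h1, h2⟩ := FP.dd_mem f ℓ r (FP.recon L L v u u') 0 ((k:ℕ))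
      injection hd with hd
      rw [hd] at h1 h2
      constructor <;> omega⟩ with hG
  have key : ∀ (c : ℤ → Fin q) (i : ℤ), (∑ᶠ j : ℤ, G.count c j i) = FP.fval f ℓ c i := by
    intro c i
    have hcnt : ∀ j : ℤ, G.count c j i
        = ∑ k ∈ Finset.range ((c j : ℕ)),
            (if FP.dd f ℓ r (FP.recon L L (c j) (fun t => c (j - (L:ℤ) + ((t:ℕ):ℤ)))
              (fun t => c (j + 1 + ((t:ℕ):ℤ)))) 0 k = i - j then 1 else 0) := by
      intro j
      rw [PA.count, Finset.card_filter]
      simp only [hG, Option.some.injEq]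
      exact Fin.sum_univ_eq_sum_range
        (fun m => if FP.dd f ℓ r (FP.recon L L (c j) (fun t => c (j - (L:ℤ) + ((t:ℕ):ℤ)))
          (fun t => c (j + 1 + ((t:ℕ):ℤ)))) 0 m = i - j then 1 else 0) ((c j : ℕ))
    set B : ℤ := 3*((ℓ:ℤ) + (r:ℤ) + (n:ℤ)) + 10 with hB
    set a : ℤ := i - B with ha
    set b : ℤ := i + B with hb
    set x : ℤ → Fin q := FP.trc c a b with hxdef
    have hx : ∀ t, t < a ∨ b < t → x t = 0 := fun t ht => FP.trc_zero c a b t ht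
    have hxc : ∀ t, a ≤ t → t ≤ b → x t = c t := fun t h1 h2 => FP.trc_eq c a b t h1 h2
    have hjx : ∀ j : ℤ, i - (ℓ:ℤ) ≤ j → j ≤ i + (r:ℤ) → ∀ k : ℕ,
        FP.dd f ℓ r (FP.recon L L (c j) (fun t => c (j - (L:ℤ) + ((t:ℕ):ℤ)))
          (fun t => c (j + 1 + ((t:ℕ):ℤ)))) 0 k = FP.dd f ℓ r x j k := by
      intro j hj1 hj2 k
      rw [← FP.dd_shift f x j k]
      apply FP.dd_congr
      intro t ht1 ht2
      rw [FP.recon_spec L L c j t (by omega) (by omega)]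
      show c (j + t) = x (j + t)
      rw [hxc (j + t) (by omega) (by omega)]
    have hzero : ∀ j : ℤ, j < i - (ℓ:ℤ) ∨ i + (r:ℤ) < j → G.count c j i = 0 := by
      intro j hj
      rw [hcnt j]
      apply Finset.sum_eq_zero
      intro k _
      rw [if_neg]
      intro hcon
      obtain ⟨h1, h2⟩ := FP.dd_mem f ℓ r (FP.recon L L (c j)
        (fun t => c (j - (L:ℤ) + ((t:ℕ):ℤ))) (fun t => c (j + 1 + ((t:ℕ):ℤ)))) 0 k
      rw [hcon] at h1 h2
      omega
    have hfin : (∑ᶠ j : ℤ, G.count c j i)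
        = ∑ j ∈ Finset.Icc (i - (ℓ:ℤ)) (i + (r:ℤ)), G.count c j i := by
      apply finsum_eq_sum_of_support_subset
      intro j hj
      simp only [Function.mem_support] at hj
      rw [Finset.coe_Icc, Set.mem_Icc]
      by_contra hcon
      exact hj (hzero j (by omega))
    have hcell : ∀ j ∈ Finset.Icc (i - (ℓ:ℤ)) (i + (r:ℤ)),
        G.count c j i = ((Finset.Ioc (FP.Tf f ℓ r x a (i-1)) (FP.Tf f ℓ r x a i))
          ∩ Finset.Ioc (FP.Tm x a (j-1)) (FP.Tm x a j)).card := by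
      intro j hjm
      rw [Finset.mem_Icc] at hjm
      rw [hcnt j]
      have hcj : ((c j : ℕ)) = ((x j : ℕ)) := by rw [hxc j (by omega) (by omega)]
      rw [hcj, Finset.sum_congr rfl (fun k _ => by rw [hjx j hjm.1 hjm.2 k]),
        ← Finset.card_filter]
      have hTmj : FP.Tm x a j = FP.Tm x a (j-1) + ((x j : ℕ) : ℤ) :=
        FP.Tm_succ x a j (by omega)
      refine Finset.card_bij' (fun (k:ℕ) _ => FP.Tm x a (j-1) + (k:ℤ) + 1)
        (fun m _ => (m - FP.Tm x a (j-1) - 1).toNat) ?_ ?_ ?_ ?_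
      · intro k hk
        rw [Finset.mem_filter, Finset.mem_range] at hk
        obtain ⟨hk1, hk2⟩ := hk
        have hkx : (k:ℤ) < ((x j : ℕ) : ℤ) := by omega
        have hch := (FP.dd_eq_iff hnlr f hf x a b hx j k (by omega) (by omega) hkx
          (i - j) (by omega) (by omega)).mp hk2
        rw [show j + (i-j) - 1 = i - 1 by ring, show j + (i-j) = i by ring] at hch
        rw [Finset.mem_inter, Finset.mem_Ioc, Finset.mem_Ioc]
        constructor
        · constructor
          · linarith [hch.1]
          · linarith [hch.2]
        · constructor
          · omega
          · omega
      · intro m hm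
        rw [Finset.mem_inter, Finset.mem_Ioc, Finset.mem_Ioc] at hm
        rw [Finset.mem_filter, Finset.mem_range]
        have hkrange : (m - FP.Tm x a (j-1) - 1).toNat < ((x j : ℕ)) := by omega
        refine ⟨hkrange, ?_⟩
        have hkx : (((m - FP.Tm x a (j-1) - 1).toNat : ℕ) : ℤ) < ((x j : ℕ) : ℤ) := by omega
        apply (FP.dd_eq_iff hnlr f hf x a b hx j _ (by omega) (by omega) hkx
          (i - j) (by omega) (by omega)).mpr
        rw [show j + (i-j) - 1 = i - 1 by ring, show j + (i-j) = i by ring]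
        have : FP.Tm x a (j-1) + (((m - FP.Tm x a (j-1) - 1).toNat : ℕ) : ℤ) + 1 = m := by omega
        rw [this]
        exact ⟨hm.1.1, hm.1.2⟩
      · intro k hk
        rw [Finset.mem_filter, Finset.mem_range] at hk
        omega
      · intro m hm
        rw [Finset.mem_inter, Finset.mem_Ioc, Finset.mem_Ioc] at hm
        omega
    rw [hfin, Finset.sum_congr rfl hcell,
      FP.tele (Finset.Ioc (FP.Tf f ℓ r x a (i-1)) (FP.Tf f ℓ r x a i))
        (fun m => FP.Tm x a m) (fun u v huv => FP.Tm_mono x a u v huv)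
        (i - (ℓ:ℤ)) (i + (r:ℤ)) (by omega)]
    have hsub : Finset.Ioc (FP.Tf f ℓ r x a (i-1)) (FP.Tf f ℓ r x a i)
        ⊆ Finset.Ioc (FP.Tm x a (i - (ℓ:ℤ) - 1)) (FP.Tm x a (i + (r:ℤ))) := by
      intro m hm
      rw [Finset.mem_Ioc] at *
      have h6 := FP.Tm_le_Tf hnlr f hf x a b hx (i-1) (by omega) (by omega)
      rw [show (i-1) - (ℓ:ℤ) = i - (ℓ:ℤ) - 1 by ring] at h6
      have h5 := FP.Tf_le_Tm hnlr f hf x a b hx i (by omega) (by omega)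
      constructor
      · linarith [hm.1]
      · linarith [hm.2]
    rw [show i - (ℓ:ℤ) - 1 = (i - (ℓ:ℤ)) - 1 by ring] at hsub
    rw [Finset.inter_eq_left.mpr hsub, Int.card_Ioc]
    rw [FP.Tf_succ f x a i (by omega)]
    rw [show FP.Tf f ℓ r x a (i-1) + (FP.fval f ℓ x i : ℤ) - FP.Tf f ℓ r x a (i-1)
      = (FP.fval f ℓ x i : ℤ) by ring, Int.toNat_natCast]
    exact FP.fval_congr hnlr f x c i (fun t h1 h2 => hxc t (by omega) (by omega))
  refine ⟨G, ⟨?_, ?_⟩, ?_, ?_⟩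
  · intro v u u' k
    simp [hG]
  · intro c i
    rw [key]
    have : FP.fval f ℓ c i < q := (f _).isLt
    omega
  · intro c i
    apply Fin.val_injective
    show min (q - 1) (∑ᶠ j : ℤ, G.count c j i) = ((F c i : ℕ))
    rw [key, hF]
    have h2 : ((f (fun t => c (i - (ℓ:ℤ) + ((t:ℕ):ℤ)))).val) = FP.fval f ℓ c i := rfl
    rw [h2]
    have : FP.fval f ℓ c i < q := (f _).isLt
    omega
  · intro v u u' k d hd
    obtain ⟨h1, h2⟩ := FP.dd_mem f ℓ r (FP.recon L L v u u') 0 ((k:ℕ))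
    injection hd with hd
    rw [hd] at h1 h2
    constructor <;> omega
end

section
/- Let Q = {0,…,q−1}, let f : Q^n → Q be conservative (f ∈ CA^0(q,n)), let 0 ≤ ℓ ≤ n−1, r = n−1−ℓ, and let F : Q^ℤ → Q^ℤ be the CA F(c)_i = f(c_{i−ℓ},…,c_{i+r}). Then there exists a conservative particle automaton G whose global map equals F and which preserves the order of particles: there is no configuration c ∈ Q^ℤ and positions i_0 ≠ j_0 with c_{i_0} ≥ 1 and c_{j_0} ≥ 1, and particle indices k, k', such that, writing i_1 = i_0 + (k-th entry of g_{c_{i_0}} at i_0) and j_1 = j_0 + (k'-th entry of g_{c_{j_0}} at j_0) (both entries being integers, not †), one has i_0 < j_0 ≤ j_1 < i_1 or i_1 < j_1 ≤ j_0 < i_0. -/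
set_option linter.unusedSectionVars false

namespace OPP

variable {q : ℕ} [NeZero q]

/-- integer value of a cell -/
def ci (c : ℤ → Fin q) (t : ℤ) : ℤ := ((c t : ℕ) : ℤ)

lemma ci_nonneg (c : ℤ → Fin q) (t : ℤ) : 0 ≤ ci c t := Int.ofNat_nonneg _

lemma ci_le (c : ℤ → Fin q) (t : ℤ) : ci c t ≤ (q : ℤ) - 1 := by
  have := (c t).isLt; unfold ci; omega

lemma ci_zero_iff (c : ℤ → Fin q) (t : ℤ) : ci c t = 0 ↔ c t = 0 := by
  unfold ci
  constructor
  · intro h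
    have : (c t : ℕ) = 0 := by omega
    ext
    rw [this, Fin.val_zero]
  · intro h; rw [h, Fin.val_zero]; rfl

/-- the local map value, as an integer -/
def Fc (n ℓ : ℕ) (f : (Fin n → Fin q) → Fin q) (c : ℤ → Fin q) (i : ℤ) : ℤ :=
  (((f (fun t => c (i - (ℓ : ℤ) + ((t : ℕ) : ℤ)))) : ℕ) : ℤ)

lemma Fc_nonneg (n ℓ : ℕ) (f : (Fin n → Fin q) → Fin q) (c : ℤ → Fin q) (i : ℤ) :
    0 ≤ Fc n ℓ f c i := Int.ofNat_nonneg _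

lemma Fc_le (n ℓ : ℕ) (f : (Fin n → Fin q) → Fin q) (c : ℤ → Fin q) (i : ℤ) :
    Fc n ℓ f c i ≤ (q : ℤ) - 1 := by
  have := (f (fun t => c (i - (ℓ : ℤ) + ((t : ℕ) : ℤ)))).isLt; unfold Fc; omega

lemma Fc_congr (n ℓ : ℕ) (f : (Fin n → Fin q) → Fin q) (c c' : ℤ → Fin q) (i : ℤ)
    (h : ∀ x, i - (ℓ:ℤ) ≤ x → x ≤ i + ((n:ℤ) - 1 - ℓ) → c x = c' x) :
    Fc n ℓ f c i = Fc n ℓ f c' i := by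
  unfold Fc
  have : (fun t : Fin n => c (i - (ℓ : ℤ) + ((t : ℕ) : ℤ))) =
      (fun t : Fin n => c' (i - (ℓ : ℤ) + ((t : ℕ) : ℤ))) := by
    funext t
    have ht : (t : ℕ) < n := t.isLt
    exact h _ (by omega) (by omega)
  rw [this]

lemma Fc_translate (n ℓ : ℕ) (f : (Fin n → Fin q) → Fin q) (c : ℤ → Fin q) (j i : ℤ) :
    Fc n ℓ f (fun x => c (j + x)) i = Fc n ℓ f c (j + i) := by
  unfold Fc
  have : (fun t : Fin n => c (j + (i - (ℓ : ℤ) + ((t : ℕ) : ℤ)))) =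
      (fun t : Fin n => c (j + i - (ℓ : ℤ) + ((t : ℕ) : ℤ))) := by
    funext t; congr 1; ring
  rw [this]

section Conserve

variable (n ℓ : ℕ) (f : (Fin n → Fin q) → Fin q)

lemma f_zero (hf : Conserves q n f) : f (fun _ => 0) = 0 := by
  have h := hf 1 le_rfl (fun _ => (0 : Fin q)) (fun _ => rfl)
  simp at h
  ext
  simpa using h

lemma Fc_zero_of_window (hf : Conserves q n f) (c : ℤ → Fin q) (i : ℤ)
    (h : ∀ x, i - (ℓ:ℤ) ≤ x → x ≤ i + ((n:ℤ) - 1 - ℓ) → c x = 0) :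
    Fc n ℓ f c i = 0 := by
  have h0 : Fc n ℓ f (fun _ => (0 : Fin q)) i = 0 := by
    unfold Fc; rw [f_zero n f hf]; simp
  rw [Fc_congr n ℓ f c (fun _ => 0) i h, h0]

end Conserve

/-- sum over a shifted range -/
lemma sum_range_eq_Icc (h : ℤ → ℤ) (x : ℤ) (m : ℕ) :
    ∑ k ∈ Finset.range m, h (x + (k : ℤ)) = ∑ t ∈ Finset.Icc x (x + (m : ℤ) - 1), h t := by
  induction m with
  | zero => simp
  | succ m ih =>
    rw [Finset.sum_range_succ, ih]
    have : Finset.Icc x (x + ((m:ℕ)+1:ℤ) - 1) = insert (x + (m:ℤ)) (Finset.Icc x (x + (m:ℤ) - 1)) := by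
      ext t; simp only [Finset.mem_Icc, Finset.mem_insert]; omega
    push_cast
    rw [this, Finset.sum_insert (by simp only [Finset.mem_Icc]; omega)]
    ring

lemma sum_Icc_split {M : Type*} [AddCommMonoid M] (g : ℤ → M) (lo mid hi : ℤ)
    (h1 : lo - 1 ≤ mid) (h2 : mid ≤ hi) :
    ∑ t ∈ Finset.Icc lo hi, g t = (∑ t ∈ Finset.Icc lo mid, g t) + ∑ t ∈ Finset.Icc (mid+1) hi, g t := by
  rw [← Finset.sum_union]
  · congr 1
    ext t; simp only [Finset.mem_Icc, Finset.mem_union]; omega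
  · rw [Finset.disjoint_left]
    intro a ha hb
    simp only [Finset.mem_Icc] at ha hb; omega

lemma sum_translate {M : Type*} [AddCommMonoid M] (h : ℤ → M) (j lo hi : ℤ) :
    ∑ t ∈ Finset.Icc lo hi, h (j + t) = ∑ t ∈ Finset.Icc (j + lo) (j + hi), h t := by
  rw [← Finset.map_add_left_Icc, Finset.sum_map]
  rfl

end OPP

namespace OPP

variable {q : ℕ} [NeZero q]

section Main

variable (n ℓ : ℕ) (f : (Fin n → Fin q) → Fin q)

lemma conserve_core (hn : 1 ≤ n) (hℓ : ℓ ≤ n - 1) (hf : Conserves q n f)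
    (c : ℤ → Fin q) (a b : ℤ) (hab : a ≤ b)
    (hsupp : ∀ t : ℤ, t < a ∨ b < t → c t = 0) :
    ∑ t ∈ Finset.Icc (a - (n:ℤ)) (b + (n:ℤ)), (ci c t - Fc n ℓ f c t) = 0 := by
  have hℓn : (ℓ : ℤ) ≤ (n : ℤ) - 1 := by omega
  set p : ℕ := (b - a).toNat + 2 * n + 1 with hp_def
  have hp : 1 ≤ p := by omega
  have hpz : (p : ℤ) = b - a + 2 * (n:ℤ) + 1 := by
    have : ((b - a).toNat : ℤ) = b - a := Int.toNat_of_nonneg (by omega)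
    push_cast
    omega
  set base : ℤ := a - (n : ℤ) with hbase
  set w : ℤ → Fin q := fun t => c (base + t % (p : ℤ)) with hw
  have hper : ∀ i : ℤ, w (i + (p : ℤ)) = w i := by
    intro i
    have : (i + (p:ℤ)) % p = i % p := by
      rw [show i + (p:ℤ) = i + (p:ℤ) * 1 by ring, Int.add_mul_emod_self_left]
    simp only [hw, this]
  have happ := hf p hp w hper
  -- rewrite the left side
  have hL : ∀ k ∈ Finset.range p,
      ((f (fun t => w ((k : ℤ) + ((t : ℕ) : ℤ)))) : ℤ) = Fc n ℓ f c (base + (ℓ:ℤ) + k) := by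
    intro k hk
    have hkp : (k : ℤ) ≤ (p : ℤ) - 1 := by
      have := Finset.mem_range.mp hk; omega
    unfold Fc
    have harg : (fun t : Fin n => w ((k : ℤ) + ((t : ℕ) : ℤ))) =
        (fun t : Fin n => c (base + (ℓ:ℤ) + (k:ℤ) - (ℓ:ℤ) + ((t : ℕ) : ℤ))) := by
      funext t
      have ht : ((t : ℕ) : ℤ) ≤ (n : ℤ) - 1 := by
        have := t.isLt; omega
      have ht0 : 0 ≤ ((t : ℕ) : ℤ) := by positivity
      set x : ℤ := (k : ℤ) + ((t : ℕ) : ℤ) with hx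
      simp only [hw]
      by_cases hlt : x < (p : ℤ)
      · rw [Int.emod_eq_of_lt (by omega) hlt]
        congr 1
        omega
      · have hmod : x % (p:ℤ) = x - p := by
          conv_lhs => rw [show x = (x - (p:ℤ)) + (p:ℤ) * 1 by ring]
          rw [Int.add_mul_emod_self_left, Int.emod_eq_of_lt (by omega) (by omega)]
        rw [hmod]
        have h1 : c (base + (x - (p:ℤ))) = 0 := hsupp _ (Or.inl (by omega))
        have h2 : c (base + (ℓ:ℤ) + (k:ℤ) - (ℓ:ℤ) + ((t : ℕ) : ℤ)) = 0 :=
          hsupp _ (Or.inr (by omega))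
        rw [h1, h2]
    rw [harg]
  rw [Finset.sum_congr rfl hL] at happ
  -- rewrite the right side
  have hR : ∀ k ∈ Finset.range p, ((w ((k:ℕ) : ℤ)) : ℤ) = ci c (base + (k:ℤ)) := by
    intro k hk
    have hkp : (k : ℤ) ≤ (p : ℤ) - 1 := by
      have := Finset.mem_range.mp hk; omega
    simp only [hw, ci]
    congr 2
    rw [Int.emod_eq_of_lt (by omega) (by omega)]
  rw [Finset.sum_congr rfl hR] at happ
  have e1 : ∑ k ∈ Finset.range p, Fc n ℓ f c (base + (ℓ:ℤ) + (k:ℤ)) =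
      ∑ t ∈ Finset.Icc (base + ℓ) (base + (ℓ:ℤ) + p - 1), Fc n ℓ f c t :=
    sum_range_eq_Icc _ _ _
  have e2 : ∑ k ∈ Finset.range p, ci c (base + (k:ℤ)) =
      ∑ t ∈ Finset.Icc base (base + (p:ℤ) - 1), ci c t :=
    sum_range_eq_Icc _ _ _
  rw [e1, e2] at happ
  -- shift the Fc range
  have hFzero_left : ∀ t ∈ Finset.Icc base (base + (ℓ:ℤ) + p - 1),
      t ∉ Finset.Icc (base + (ℓ:ℤ)) (base + (ℓ:ℤ) + p - 1) → Fc n ℓ f c t = 0 := by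
    intro t ht hnt
    simp only [Finset.mem_Icc] at ht hnt
    apply Fc_zero_of_window n ℓ f hf
    intro x hx1 hx2
    exact hsupp _ (Or.inl (by omega))
  have hFzero_right : ∀ t ∈ Finset.Icc base (base + (ℓ:ℤ) + p - 1),
      t ∉ Finset.Icc base (base + (p:ℤ) - 1) → Fc n ℓ f c t = 0 := by
    intro t ht hnt
    simp only [Finset.mem_Icc] at ht hnt
    apply Fc_zero_of_window n ℓ f hf
    intro x hx1 hx2
    exact hsupp _ (Or.inr (by omega))
  have eA : ∑ t ∈ Finset.Icc (base + (ℓ:ℤ)) (base + (ℓ:ℤ) + p - 1), Fc n ℓ f c t =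
      ∑ t ∈ Finset.Icc base (base + (ℓ:ℤ) + p - 1), Fc n ℓ f c t :=
    Finset.sum_subset (by
      intro x hx
      simp only [Finset.mem_Icc] at hx ⊢
      omega) hFzero_left
  have eB : ∑ t ∈ Finset.Icc base (base + (p:ℤ) - 1), Fc n ℓ f c t =
      ∑ t ∈ Finset.Icc base (base + (ℓ:ℤ) + p - 1), Fc n ℓ f c t :=
    Finset.sum_subset (by
      intro x hx
      simp only [Finset.mem_Icc] at hx ⊢
      omega) hFzero_right
  have eshift : ∑ t ∈ Finset.Icc (base + (ℓ:ℤ)) (base + (ℓ:ℤ) + p - 1), Fc n ℓ f c t =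
      ∑ t ∈ Finset.Icc base (base + (p:ℤ) - 1), Fc n ℓ f c t := by rw [eA, eB]
  rw [eshift] at happ
  have hend : base + (p:ℤ) - 1 = b + n := by omega
  rw [hend] at happ
  rw [Finset.sum_sub_distrib]
  omega

lemma conserve (hn : 1 ≤ n) (hℓ : ℓ ≤ n - 1) (hf : Conserves q n f)
    (c : ℤ → Fin q) (a b : ℤ) (hab : a ≤ b)
    (hsupp : ∀ t : ℤ, t < a ∨ b < t → c t = 0)
    (lo hi : ℤ) (hlo : lo ≤ a - n) (hhi : b + n ≤ hi) :
    ∑ t ∈ Finset.Icc lo hi, (ci c t - Fc n ℓ f c t) = 0 := by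
  rw [← conserve_core n ℓ f hn hℓ hf c a b hab hsupp]
  symm
  apply Finset.sum_subset
  · intro x hx
    simp only [Finset.mem_Icc] at hx ⊢
    omega
  · intro t ht hnt
    simp only [Finset.mem_Icc] at ht hnt
    have hci : ci c t = 0 := by
      rw [ci_zero_iff]
      apply hsupp
      omega
    have hFc : Fc n ℓ f c t = 0 := by
      apply Fc_zero_of_window n ℓ f hf
      intro x hx1 hx2
      apply hsupp
      omega
    omega

end Main
end OPP

namespace OPP

variable {q : ℕ} [NeZero q]

/-- right radius -/
def rz (n ℓ : ℕ) : ℤ := (n:ℤ) - 1 - (ℓ:ℤ)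

/-- configuration cut to the window of edge `e` -/
def cw (n ℓ : ℕ) (c : ℤ → Fin q) (e : ℤ) : ℤ → Fin q :=
  fun x => if e - (ℓ:ℤ) + 1 ≤ x ∧ x ≤ e + rz n ℓ then c x else 0

/-- the local flow across edge `e` -/
noncomputable def phi (n ℓ : ℕ) (f : (Fin n → Fin q) → Fin q) (c : ℤ → Fin q) (e : ℤ) : ℤ :=
  (∑ t ∈ Finset.Icc (e+1) (e + (n:ℤ) - 1), Fc n ℓ f (cw n ℓ c e) t)
  - ∑ t ∈ Finset.Icc (e+1) (e + rz n ℓ), ci c t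

section Phi

variable (n ℓ : ℕ) (f : (Fin n → Fin q) → Fin q)

lemma cw_congr (c c' : ℤ → Fin q) (e : ℤ)
    (h : ∀ x, e - (ℓ:ℤ) + 1 ≤ x → x ≤ e + rz n ℓ → c x = c' x) :
    cw n ℓ c e = cw n ℓ c' e := by
  funext x
  unfold cw
  by_cases hx : e - (ℓ:ℤ) + 1 ≤ x ∧ x ≤ e + rz n ℓ
  · rw [if_pos hx, if_pos hx, h x hx.1 hx.2]
  · rw [if_neg hx, if_neg hx]

lemma phi_congr (c c' : ℤ → Fin q) (e : ℤ)
    (h : ∀ x, e - (ℓ:ℤ) + 1 ≤ x → x ≤ e + rz n ℓ → c x = c' x) :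
    phi n ℓ f c e = phi n ℓ f c' e := by
  unfold phi
  rw [cw_congr n ℓ c c' e h]
  congr 1
  apply Finset.sum_congr rfl
  intro t ht
  simp only [Finset.mem_Icc] at ht
  unfold ci
  rw [h t (by unfold rz at *; omega) (by omega)]

lemma phi_translate (c : ℤ → Fin q) (j e : ℤ) :
    phi n ℓ f (fun x => c (j + x)) e = phi n ℓ f c (j + e) := by
  unfold phi
  have hcw : cw n ℓ (fun x => c (j + x)) e = fun x => cw n ℓ c (j + e) (j + x) := by
    funext x
    unfold cw
    have hiff : (e - (ℓ:ℤ) + 1 ≤ x ∧ x ≤ e + rz n ℓ) ↔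
        ((j+e) - (ℓ:ℤ) + 1 ≤ j + x ∧ j + x ≤ (j+e) + rz n ℓ) := by constructor <;> (intro h; omega)
    by_cases hx : e - (ℓ:ℤ) + 1 ≤ x ∧ x ≤ e + rz n ℓ
    · rw [if_pos hx, if_pos (hiff.mp hx)]
    · rw [if_neg hx, if_neg (fun h => hx (hiff.mpr h))]
  rw [hcw]
  congr 1
  · have : ∀ t : ℤ, Fc n ℓ f (fun x => cw n ℓ c (j+e) (j + x)) t = Fc n ℓ f (cw n ℓ c (j+e)) (j + t) :=
      fun t => Fc_translate n ℓ f (cw n ℓ c (j+e)) j t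
    rw [Finset.sum_congr rfl (fun t _ => this t), sum_translate (fun t => Fc n ℓ f (cw n ℓ c (j+e)) t) j (e+1) (e + (n:ℤ) - 1)]
    congr 1 <;> ring
  · rw [show (∑ t ∈ Finset.Icc (e+1) (e + rz n ℓ), ci (fun x => c (j + x)) t) =
        ∑ t ∈ Finset.Icc (e+1) (e + rz n ℓ), ci c (j + t) from rfl,
      sum_translate (ci c) j (e+1) (e + rz n ℓ)]
    congr 1 <;> ring

lemma phi_zero_window (hf : Conserves q n f) (c : ℤ → Fin q) (e : ℤ)
    (h : ∀ x, e - (ℓ:ℤ) + 1 ≤ x → x ≤ e + rz n ℓ → c x = 0) :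
    phi n ℓ f c e = 0 := by
  unfold phi
  have h1 : ∀ t ∈ Finset.Icc (e+1) (e + (n:ℤ) - 1), Fc n ℓ f (cw n ℓ c e) t = 0 := by
    intro t _
    apply Fc_zero_of_window n ℓ f hf
    intro x _ _
    unfold cw
    by_cases hx : e - (ℓ:ℤ) + 1 ≤ x ∧ x ≤ e + rz n ℓ
    · rw [if_pos hx]; exact h x hx.1 hx.2
    · rw [if_neg hx]
  have h2 : ∀ t ∈ Finset.Icc (e+1) (e + rz n ℓ), ci c t = 0 := by
    intro t ht
    simp only [Finset.mem_Icc] at ht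
    rw [ci_zero_iff]
    exact h t (by unfold rz at *; omega) ht.2
  rw [Finset.sum_congr rfl h1, Finset.sum_congr rfl h2]
  simp

lemma phi_le (hn : 1 ≤ n) (c : ℤ → Fin q) (e : ℤ) :
    phi n ℓ f c e ≤ ((n:ℤ) - 1) * ((q:ℤ) - 1) := by
  unfold phi
  have h1 : ∑ t ∈ Finset.Icc (e+1) (e + (n:ℤ) - 1), Fc n ℓ f (cw n ℓ c e) t ≤
      ((n:ℤ) - 1) * ((q:ℤ) - 1) := by
    calc ∑ t ∈ Finset.Icc (e+1) (e + (n:ℤ) - 1), Fc n ℓ f (cw n ℓ c e) t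
        ≤ ∑ _t ∈ Finset.Icc (e+1) (e + (n:ℤ) - 1), ((q:ℤ) - 1) :=
          Finset.sum_le_sum (fun t _ => Fc_le n ℓ f _ t)
      _ = ((Finset.Icc (e+1) (e + (n:ℤ) - 1)).card : ℤ) * ((q:ℤ) - 1) := by
          rw [Finset.sum_const, nsmul_eq_mul]
      _ ≤ ((n:ℤ) - 1) * ((q:ℤ) - 1) := by
          apply mul_le_mul_of_nonneg_right _ (by have := NeZero.ne q; omega)
          rw [Int.card_Icc]
          omega
  have h2 : 0 ≤ ∑ t ∈ Finset.Icc (e+1) (e + rz n ℓ), ci c t :=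
    Finset.sum_nonneg (fun t _ => ci_nonneg c t)
  omega

lemma phi_ge (hn : 1 ≤ n) (hℓ : ℓ ≤ n - 1) (c : ℤ → Fin q) (e : ℤ) :
    -(((n:ℤ) - 1) * ((q:ℤ) - 1)) ≤ phi n ℓ f c e := by
  unfold phi
  have h1 : 0 ≤ ∑ t ∈ Finset.Icc (e+1) (e + (n:ℤ) - 1), Fc n ℓ f (cw n ℓ c e) t :=
    Finset.sum_nonneg (fun t _ => Fc_nonneg n ℓ f _ t)
  have h2 : ∑ t ∈ Finset.Icc (e+1) (e + rz n ℓ), ci c t ≤ ((n:ℤ) - 1) * ((q:ℤ) - 1) := by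
    calc ∑ t ∈ Finset.Icc (e+1) (e + rz n ℓ), ci c t
        ≤ ∑ _t ∈ Finset.Icc (e+1) (e + rz n ℓ), ((q:ℤ) - 1) :=
          Finset.sum_le_sum (fun t _ => ci_le c t)
      _ = ((Finset.Icc (e+1) (e + rz n ℓ)).card : ℤ) * ((q:ℤ) - 1) := by
          rw [Finset.sum_const, nsmul_eq_mul]
      _ ≤ ((n:ℤ) - 1) * ((q:ℤ) - 1) := by
          apply mul_le_mul_of_nonneg_right _ (by have := NeZero.ne q; omega)
          rw [Int.card_Icc]
          unfold rz
          omega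
  omega

end Phi
end OPP

namespace OPP

variable {q : ℕ} [NeZero q]

section PhiPartial

variable (n ℓ : ℕ) (f : (Fin n → Fin q) → Fin q)

lemma phi_eq_partial (hn : 1 ≤ n) (hℓ : ℓ ≤ n - 1) (hf : Conserves q n f)
    (c : ℤ → Fin q) (a b : ℤ) (hab : a ≤ b)
    (hsupp : ∀ t : ℤ, t < a ∨ b < t → c t = 0)
    (e lo : ℤ) (hlo : lo ≤ a - n) (hloe : lo ≤ e + 1) :
    phi n ℓ f c e = ∑ t ∈ Finset.Icc lo e, (ci c t - Fc n ℓ f c t) := by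
  have hrz : 0 ≤ rz n ℓ := by unfold rz; omega
  have hℓz : (0:ℤ) ≤ (ℓ:ℤ) := by positivity
  have hℓn : (ℓ:ℤ) ≤ (n:ℤ) - 1 := by omega
  set hi : ℤ := max (b + (n:ℤ)) (e + (n:ℤ)) with hhi
  set lo2 : ℤ := min lo (e - (ℓ:ℤ) - (n:ℤ)) with hlo2
  set hi2 : ℤ := max hi (e + rz n ℓ + (n:ℤ)) with hhi2
  set c1 : ℤ → Fin q := fun x => if e - (ℓ:ℤ) + 1 ≤ x then c x else 0 with hc1
  set chat : ℤ → Fin q := cw n ℓ c e with hchat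
  set g : (ℤ → Fin q) → ℤ → ℤ := fun c' t => ci c' t - Fc n ℓ f c' t with hg
  -- conservation for c, split at e
  have hsplit_c : (∑ t ∈ Finset.Icc lo e, g c t) + ∑ t ∈ Finset.Icc (e+1) hi, g c t = 0 := by
    rw [← sum_Icc_split (g c) lo e hi (by omega) (by omega)]
    exact conserve n ℓ f hn hℓ hf c a b hab hsupp lo hi (by omega) (by omega)
  -- c and c1 agree beyond e
  have h1 : ∑ t ∈ Finset.Icc (e+1) hi, g c t = ∑ t ∈ Finset.Icc (e+1) hi, g c1 t := by
    apply Finset.sum_congr rfl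
    intro t ht
    simp only [Finset.mem_Icc] at ht
    have hci : ci c t = ci c1 t := by
      unfold ci
      rw [hc1]
      simp only
      rw [if_pos (by omega)]
    have hFc : Fc n ℓ f c t = Fc n ℓ f c1 t := by
      apply Fc_congr
      intro x hx1 hx2
      rw [hc1]
      simp only
      rw [if_pos (by omega)]
    rw [hg]
    simp only
    omega
  -- conservation for c1 split at e
  have hsupp1 : ∀ t : ℤ, t < a ∨ b < t → c1 t = 0 := by
    intro t ht
    rw [hc1]
    simp only
    rw [hsupp t ht]
    split <;> rfl
  have hsplit_c1 : (∑ t ∈ Finset.Icc lo2 e, g c1 t) + ∑ t ∈ Finset.Icc (e+1) hi, g c1 t = 0 := by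
    rw [← sum_Icc_split (g c1) lo2 e hi (by omega) (by omega)]
    exact conserve n ℓ f hn hℓ hf c1 a b hab hsupp1 lo2 hi (by omega) (by omega)
  -- c1 and chat agree on (-inf, e]
  have h3 : ∑ t ∈ Finset.Icc lo2 e, g c1 t = ∑ t ∈ Finset.Icc lo2 e, g chat t := by
    apply Finset.sum_congr rfl
    intro t ht
    simp only [Finset.mem_Icc] at ht
    have hci : ci c1 t = ci chat t := by
      unfold ci
      rw [hc1, hchat]
      unfold cw
      simp only
      by_cases hxx : e - (ℓ:ℤ) + 1 ≤ t
      · rw [if_pos hxx, if_pos ⟨hxx, by omega⟩]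
      · rw [if_neg hxx, if_neg (by intro hcon; exact hxx hcon.1)]
    have hFc : Fc n ℓ f c1 t = Fc n ℓ f chat t := by
      apply Fc_congr
      intro x hx1 hx2
      rw [hc1, hchat]
      unfold cw
      simp only
      by_cases hxx : e - (ℓ:ℤ) + 1 ≤ x
      · rw [if_pos hxx, if_pos ⟨hxx, by unfold rz at *; omega⟩]
      · rw [if_neg hxx, if_neg (by intro hcon; exact hxx hcon.1)]
    rw [hg]
    simp only
    omega
  -- conservation for chat split at e
  have hsuppchat : ∀ t : ℤ, t < e - (ℓ:ℤ) ∨ e + rz n ℓ < t → chat t = 0 := by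
    intro t ht
    rw [hchat]
    unfold cw
    rw [if_neg (by omega)]
  have hsplit_chat : (∑ t ∈ Finset.Icc lo2 e, g chat t) + ∑ t ∈ Finset.Icc (e+1) hi2, g chat t = 0 := by
    rw [← sum_Icc_split (g chat) lo2 e hi2 (by omega) (by omega)]
    exact conserve n ℓ f hn hℓ hf chat (e - (ℓ:ℤ)) (e + rz n ℓ) (by omega) hsuppchat lo2 hi2
      (by omega) (by omega)
  -- compute the chat tail as phi
  have htail : ∑ t ∈ Finset.Icc (e+1) hi2, g chat t = - phi n ℓ f c e := by
    have hFcpart : ∑ t ∈ Finset.Icc (e+1) (e + (n:ℤ) - 1), Fc n ℓ f chat t =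
        ∑ t ∈ Finset.Icc (e+1) hi2, Fc n ℓ f chat t := by
      apply Finset.sum_subset
      · intro x hx
        simp only [Finset.mem_Icc] at hx ⊢
        omega
      · intro t ht hnt
        simp only [Finset.mem_Icc] at ht hnt
        apply Fc_zero_of_window n ℓ f hf
        intro x hx1 hx2
        apply hsuppchat
        unfold rz at *
        omega
    have hcipart : ∑ t ∈ Finset.Icc (e+1) (e + rz n ℓ), ci c t =
        ∑ t ∈ Finset.Icc (e+1) hi2, ci chat t := by
      rw [show (∑ t ∈ Finset.Icc (e+1) (e + rz n ℓ), ci c t) =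
          ∑ t ∈ Finset.Icc (e+1) (e + rz n ℓ), ci chat t from by
        apply Finset.sum_congr rfl
        intro t ht
        simp only [Finset.mem_Icc] at ht
        unfold ci
        rw [hchat]
        unfold cw
        rw [if_pos ⟨by omega, ht.2⟩]]
      apply Finset.sum_subset
      · intro x hx
        simp only [Finset.mem_Icc] at hx ⊢
        omega
      · intro t ht hnt
        simp only [Finset.mem_Icc] at ht hnt
        rw [ci_zero_iff]
        apply hsuppchat
        omega
    unfold phi
    rw [← hchat, hFcpart, hcipart, hg]
    simp only
    rw [Finset.sum_sub_distrib]
    ring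
  -- assemble
  have hgoal : ∑ t ∈ Finset.Icc lo e, g c t = phi n ℓ f c e := by omega
  rw [← hgoal, hg]

lemma star (hn : 1 ≤ n) (hℓ : ℓ ≤ n - 1) (hf : Conserves q n f)
    (c : ℤ → Fin q) (i : ℤ) :
    Fc n ℓ f c i = ci c i + phi n ℓ f c (i-1) - phi n ℓ f c i := by
  have hℓn : (ℓ:ℤ) ≤ (n:ℤ) - 1 := by omega
  have hrz : 0 ≤ rz n ℓ := by unfold rz; omega
  set a : ℤ := i - 2*(n:ℤ) with ha
  set b : ℤ := i + 2*(n:ℤ) with hb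
  set c' : ℤ → Fin q := fun x => if a ≤ x ∧ x ≤ b then c x else 0 with hc'
  have hsupp : ∀ t : ℤ, t < a ∨ b < t → c' t = 0 := by
    intro t ht
    rw [hc']
    simp only
    rw [if_neg (by omega)]
  have hagree : ∀ x, a ≤ x → x ≤ b → c x = c' x := by
    intro x h1 h2
    rw [hc']
    simp only
    rw [if_pos ⟨h1, h2⟩]
  have hFc : Fc n ℓ f c i = Fc n ℓ f c' i := by
    apply Fc_congr
    intro x h1 h2
    exact hagree x (by omega) (by omega)
  have hci : ci c i = ci c' i := by
    unfold ci
    rw [hagree i (by omega) (by omega)]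
  have hphi1 : phi n ℓ f c (i-1) = phi n ℓ f c' (i-1) := by
    apply phi_congr
    intro x h1 h2
    exact hagree x (by omega) (by unfold rz at *; omega)
  have hphi2 : phi n ℓ f c i = phi n ℓ f c' i := by
    apply phi_congr
    intro x h1 h2
    exact hagree x (by omega) (by unfold rz at *; omega)
  set lo : ℤ := a - (n:ℤ) with hlo
  have hp1 : phi n ℓ f c' (i-1) = ∑ t ∈ Finset.Icc lo (i-1), (ci c' t - Fc n ℓ f c' t) :=
    phi_eq_partial n ℓ f hn hℓ hf c' a b (by omega) hsupp (i-1) lo (by omega) (by omega)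
  have hp2 : phi n ℓ f c' i = ∑ t ∈ Finset.Icc lo i, (ci c' t - Fc n ℓ f c' t) :=
    phi_eq_partial n ℓ f hn hℓ hf c' a b (by omega) hsupp i lo (by omega) (by omega)
  have hsplit := sum_Icc_split (fun t => ci c' t - Fc n ℓ f c' t) lo (i-1) i (by omega) (by omega)
  rw [show i-1+1 = i by ring] at hsplit
  rw [Finset.Icc_self, Finset.sum_singleton] at hsplit
  omega

end PhiPartial
end OPP

namespace OPP

variable {q : ℕ} [NeZero q]

/-- the key length scale -/
def L0 (q n : ℕ) : ℕ := ((n-1)*(q-1)+2)*n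

section Bounds

variable (n ℓ : ℕ) (f : (Fin n → Fin q) → Fin q)

lemma L0_cast (hn : 1 ≤ n) : ((L0 q n : ℕ) : ℤ) = (((n:ℤ)-1) * ((q:ℤ)-1) + 2) * (n:ℤ) := by
  have hq : 1 ≤ q := Nat.pos_of_ne_zero (NeZero.ne q)
  unfold L0
  have h1 : ((n-1 : ℕ) : ℤ) = (n:ℤ)-1 := by omega
  have h2 : ((q-1 : ℕ) : ℤ) = (q:ℤ)-1 := by omega
  push_cast [h1, h2]
  ring

lemma phi_diff_nat (hn : 1 ≤ n) (hℓ : ℓ ≤ n - 1) (hf : Conserves q n f)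
    (c : ℤ → Fin q) (e' : ℤ) : ∀ m : ℕ,
    phi n ℓ f c (e' + (m:ℤ)) = phi n ℓ f c e' +
      ∑ t ∈ Finset.Icc (e'+1) (e'+(m:ℤ)), (ci c t - Fc n ℓ f c t) := by
  intro m
  induction m with
  | zero => simp
  | succ m ih =>
    have hstar := star n ℓ f hn hℓ hf c (e' + (m:ℤ) + 1)
    have hsplit := sum_Icc_split (fun t => ci c t - Fc n ℓ f c t) (e'+1) (e'+(m:ℤ))
      (e'+(m:ℤ)+1) (by omega) (by omega)
    rw [Finset.Icc_self, Finset.sum_singleton] at hsplit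
    push_cast
    rw [show e' + ((m:ℤ)+1) = e' + (m:ℤ) + 1 by ring]
    rw [show e' + (m:ℤ) + 1 - 1 = e' + (m:ℤ) by ring] at hstar
    omega

lemma phi_diff (hn : 1 ≤ n) (hℓ : ℓ ≤ n - 1) (hf : Conserves q n f)
    (c : ℤ → Fin q) (e' e : ℤ) (h : e' ≤ e) :
    phi n ℓ f c e = phi n ℓ f c e' + ∑ t ∈ Finset.Icc (e'+1) e, (ci c t - Fc n ℓ f c t) := by
  have h0 := phi_diff_nat n ℓ f hn hℓ hf c e' (e - e').toNat
  have h2 : e' + (((e - e').toNat : ℕ) : ℤ) = e := by omega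
  rw [h2] at h0
  exact h0

/-- pigeonhole: disjoint witness windows force a large sum -/
lemma sum_ci_ge (c : ℤ → Fin q) (S : Finset ℤ) (T : Finset ℕ) (W : ℕ → Finset ℤ)
    (hsub : ∀ s ∈ T, W s ⊆ S)
    (hdisj : (T : Set ℕ).PairwiseDisjoint W)
    (hne : ∀ s ∈ T, ∃ x ∈ W s, c x ≠ 0) :
    (T.card : ℤ) ≤ ∑ t ∈ S, ci c t := by
  have h1 : ∑ t ∈ T.biUnion W, ci c t ≤ ∑ t ∈ S, ci c t := by
    apply Finset.sum_le_sum_of_subset_of_nonneg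
    · intro x hx
      rw [Finset.mem_biUnion] at hx
      obtain ⟨s, hs, hxs⟩ := hx
      exact hsub s hs hxs
    · intro t _ _
      exact ci_nonneg c t
  rw [Finset.sum_biUnion hdisj] at h1
  have h2 : ∀ s ∈ T, (1:ℤ) ≤ ∑ x ∈ W s, ci c x := by
    intro s hs
    obtain ⟨x, hx, hcx⟩ := hne s hs
    calc (1:ℤ) ≤ ci c x := by
          have := ci_nonneg c x
          have := (ci_zero_iff c x).not.mpr ?_
          · omega
          · intro h0; exact hcx h0
      _ ≤ ∑ x ∈ W s, ci c x := Finset.single_le_sum (fun t _ => ci_nonneg c t) hx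
  calc (T.card : ℤ) = ∑ _s ∈ T, (1:ℤ) := by rw [Finset.sum_const, nsmul_eq_mul, mul_one]
    _ ≤ ∑ s ∈ T, ∑ x ∈ W s, ci c x := Finset.sum_le_sum h2
    _ ≤ ∑ t ∈ S, ci c t := h1

lemma KL (hn : 1 ≤ n) (hℓ : ℓ ≤ n - 1) (hf : Conserves q n f)
    (c : ℤ → Fin q) (e : ℤ) :
    phi n ℓ f c e ≤ ∑ t ∈ Finset.Icc (e - (L0 q n : ℤ) + 1) e, ci c t := by
  have hq : 1 ≤ q := Nat.pos_of_ne_zero (NeZero.ne q)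
  set B : ℤ := ((n:ℤ)-1) * ((q:ℤ)-1) with hB
  have hB0 : 0 ≤ B := by
    apply mul_nonneg <;> omega
  have hL0 : ((L0 q n : ℕ) : ℤ) = (B + 2) * n := L0_cast n hn
  have hlink : (B+1)*(n:ℤ) + (n:ℤ) = (B+2)*(n:ℤ) := by ring
  have hn1 : (1:ℤ) ≤ (n:ℤ) := by exact_mod_cast hn
  have hrz : 0 ≤ rz n ℓ ∧ rz n ℓ = (n:ℤ) - 1 - ℓ ∧ (ℓ:ℤ) ≤ (n:ℤ)-1 := by
    unfold rz; omega
  by_cases hz : ∃ s : ℕ, 1 ≤ s ∧ (s:ℤ) ≤ B + 1 ∧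
      (∀ x, e - (s:ℤ)*n - (ℓ:ℤ) + 1 ≤ x → x ≤ e - (s:ℤ)*n + rz n ℓ → c x = 0)
  · obtain ⟨s, hs1, hs2, hszero⟩ := hz
    have hsn : 0 ≤ (s:ℤ) * n ∧ (s:ℤ)*n ≤ (B+1)*n := by
      constructor
      · positivity
      · apply mul_le_mul_of_nonneg_right hs2 (by omega)
    have h0 : phi n ℓ f c (e - (s:ℤ)*n) = 0 := by
      apply phi_zero_window n ℓ f hf
      intro x h1 h2
      exact hszero x (by omega) (by omega)
    have hd := phi_diff n ℓ f hn hℓ hf c (e - (s:ℤ)*n) e (by omega)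
    rw [h0, zero_add] at hd
    calc phi n ℓ f c e = ∑ t ∈ Finset.Icc (e - (s:ℤ)*n + 1) e, (ci c t - Fc n ℓ f c t) := hd
      _ ≤ ∑ t ∈ Finset.Icc (e - (s:ℤ)*n + 1) e, ci c t := by
          apply Finset.sum_le_sum
          intro t _
          have := Fc_nonneg n ℓ f c t
          omega
      _ ≤ ∑ t ∈ Finset.Icc (e - (L0 q n : ℤ) + 1) e, ci c t := by
          apply Finset.sum_le_sum_of_subset_of_nonneg
          · intro x hx
            simp only [Finset.mem_Icc] at hx ⊢
            omega
          · intro t _ _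
            exact ci_nonneg c t
  · push_neg at hz
    have hge : (B + 1 : ℤ) ≤ ∑ t ∈ Finset.Icc (e - (L0 q n : ℤ) + 1) e, ci c t := by
      have hcard : ((Finset.Icc 1 (B+1).toNat).card : ℤ) = B + 1 := by
        rw [Nat.card_Icc]
        omega
      rw [← hcard]
      apply sum_ci_ge c _ _ (fun s => Finset.Icc (e - (s:ℤ)*n - (ℓ:ℤ) + 1) (e - (s:ℤ)*n + rz n ℓ))
      · intro s hs
        simp only [Finset.mem_Icc] at hs
        intro x hx
        simp only [Finset.mem_Icc] at hx ⊢
        have hs2 : (s:ℤ) ≤ B+1 := by omega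
        have h1 : 1 ≤ (s:ℤ) := by exact_mod_cast hs.1
        have hsn : (s:ℤ)*n ≤ (B+1)*n := mul_le_mul_of_nonneg_right hs2 (by omega)
        have hsn1 : (n:ℤ) ≤ (s:ℤ)*n := le_mul_of_one_le_left (by omega) h1
        omega
      · intro s hs s' hs' hne
        simp only [Finset.coe_Icc, Set.mem_Icc] at hs hs'
        apply Finset.disjoint_left.mpr
        intro x hx hx'
        simp only [Finset.mem_Icc] at hx hx'
        rcases lt_or_gt_of_ne hne with h | h
        · have : (s:ℤ) + 1 ≤ (s':ℤ) := by exact_mod_cast h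
          have : (s:ℤ)*n + n ≤ (s':ℤ)*n := by nlinarith
          omega
        · have : (s':ℤ) + 1 ≤ (s:ℤ) := by exact_mod_cast h
          have : (s':ℤ)*n + n ≤ (s:ℤ)*n := by nlinarith
          omega
      · intro s hs
        simp only [Finset.mem_Icc] at hs
        have h1 : 1 ≤ s := hs.1
        have hs2 : (s:ℤ) ≤ B+1 := by omega
        obtain ⟨x, hx1, hx2, hcx⟩ := hz s h1 hs2
        exact ⟨x, Finset.mem_Icc.mpr ⟨hx1, hx2⟩, hcx⟩
    have := phi_le n ℓ f hn c e
    omega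

lemma KR (hn : 1 ≤ n) (hℓ : ℓ ≤ n - 1) (hf : Conserves q n f)
    (c : ℤ → Fin q) (e : ℤ) :
    -(∑ t ∈ Finset.Icc (e+1) (e + (L0 q n : ℤ)), ci c t) ≤ phi n ℓ f c e := by
  have hq : 1 ≤ q := Nat.pos_of_ne_zero (NeZero.ne q)
  set B : ℤ := ((n:ℤ)-1) * ((q:ℤ)-1) with hB
  have hB0 : 0 ≤ B := by
    apply mul_nonneg <;> omega
  have hL0 : ((L0 q n : ℕ) : ℤ) = (B + 2) * n := L0_cast n hn
  have hlink : (B+1)*(n:ℤ) + (n:ℤ) = (B+2)*(n:ℤ) := by ring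
  have hn1 : (1:ℤ) ≤ (n:ℤ) := by exact_mod_cast hn
  have hrz : 0 ≤ rz n ℓ ∧ rz n ℓ = (n:ℤ) - 1 - ℓ ∧ (ℓ:ℤ) ≤ (n:ℤ)-1 := by
    unfold rz; omega
  by_cases hz : ∃ s : ℕ, 1 ≤ s ∧ (s:ℤ) ≤ B + 1 ∧
      (∀ x, e + (s:ℤ)*n - (ℓ:ℤ) + 1 ≤ x → x ≤ e + (s:ℤ)*n + rz n ℓ → c x = 0)
  · obtain ⟨s, hs1, hs2, hszero⟩ := hz
    have h1s : 1 ≤ (s:ℤ) := by exact_mod_cast hs1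
    have hsn : (n:ℤ) ≤ (s:ℤ) * n ∧ (s:ℤ)*n ≤ (B+1)*n := by
      constructor
      · exact le_mul_of_one_le_left (by omega) h1s
      · apply mul_le_mul_of_nonneg_right hs2 (by omega)
    have h0 : phi n ℓ f c (e + (s:ℤ)*n) = 0 := by
      apply phi_zero_window n ℓ f hf
      intro x h1 h2
      exact hszero x (by omega) (by omega)
    have hd := phi_diff n ℓ f hn hℓ hf c e (e + (s:ℤ)*n) (by omega)
    rw [h0] at hd
    have hle : ∑ t ∈ Finset.Icc (e+1) (e + (s:ℤ)*n), (ci c t - Fc n ℓ f c t) ≤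
        ∑ t ∈ Finset.Icc (e+1) (e + (L0 q n : ℤ)), ci c t := by
      calc ∑ t ∈ Finset.Icc (e+1) (e + (s:ℤ)*n), (ci c t - Fc n ℓ f c t)
          ≤ ∑ t ∈ Finset.Icc (e+1) (e + (s:ℤ)*n), ci c t := by
            apply Finset.sum_le_sum
            intro t _
            have := Fc_nonneg n ℓ f c t
            omega
        _ ≤ ∑ t ∈ Finset.Icc (e+1) (e + (L0 q n : ℤ)), ci c t := by
            apply Finset.sum_le_sum_of_subset_of_nonneg
            · intro x hx
              simp only [Finset.mem_Icc] at hx ⊢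
              omega
            · intro t _ _
              exact ci_nonneg c t
    omega
  · push_neg at hz
    have hge : (B + 1 : ℤ) ≤ ∑ t ∈ Finset.Icc (e+1) (e + (L0 q n : ℤ)), ci c t := by
      have hcard : ((Finset.Icc 1 (B+1).toNat).card : ℤ) = B + 1 := by
        rw [Nat.card_Icc]
        omega
      rw [← hcard]
      apply sum_ci_ge c _ _ (fun s => Finset.Icc (e + (s:ℤ)*n - (ℓ:ℤ) + 1) (e + (s:ℤ)*n + rz n ℓ))
      · intro s hs
        simp only [Finset.mem_Icc] at hs
        intro x hx
        simp only [Finset.mem_Icc] at hx ⊢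
        have hs2 : (s:ℤ) ≤ B+1 := by omega
        have h1 : 1 ≤ (s:ℤ) := by exact_mod_cast hs.1
        have hsn : (s:ℤ)*n ≤ (B+1)*n := mul_le_mul_of_nonneg_right hs2 (by omega)
        have hsn1 : (n:ℤ) ≤ (s:ℤ)*n := le_mul_of_one_le_left (by omega) h1
        omega
      · intro s hs s' hs' hne
        apply Finset.disjoint_left.mpr
        intro x hx hx'
        simp only [Finset.mem_Icc] at hx hx'
        rcases lt_or_gt_of_ne hne with h | h
        · have : (s:ℤ) + 1 ≤ (s':ℤ) := by exact_mod_cast h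
          have : (s:ℤ)*n + n ≤ (s':ℤ)*n := by nlinarith
          omega
        · have : (s':ℤ) + 1 ≤ (s:ℤ) := by exact_mod_cast h
          have : (s':ℤ)*n + n ≤ (s:ℤ)*n := by nlinarith
          omega
      · intro s hs
        simp only [Finset.mem_Icc] at hs
        have h1 : 1 ≤ s := hs.1
        have hs2 : (s:ℤ) ≤ B+1 := by omega
        obtain ⟨x, hx1, hx2, hcx⟩ := hz s h1 hs2
        exact ⟨x, Finset.mem_Icc.mpr ⟨hx1, hx2⟩, hcx⟩
    have := phi_ge n ℓ f hn hℓ c e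
    omega

end Bounds
end OPP

namespace OPP

variable {q : ℕ} [NeZero q]

/-- the neighborhood radius of the particle automaton -/
def LL (q n : ℕ) : ℕ := L0 q n + n + 1

/-- relative cumulative function: `psi c j d = T (j+d) - S (j-1)` -/
noncomputable def psi (n ℓ : ℕ) (f : (Fin n → Fin q) → Fin q) (c : ℤ → Fin q) (j d : ℤ) : ℤ :=
  (∑ t ∈ Finset.Icc j (j+d), ci c t) - (∑ t ∈ Finset.Icc (j+d+1) (j-1), ci c t)
    - phi n ℓ f c (j+d)

section Psi

variable (n ℓ : ℕ) (f : (Fin n → Fin q) → Fin q)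

lemma psi_succ (hn : 1 ≤ n) (hℓ : ℓ ≤ n - 1) (hf : Conserves q n f)
    (c : ℤ → Fin q) (j d : ℤ) :
    psi n ℓ f c j d = psi n ℓ f c j (d-1) + Fc n ℓ f c (j+d) := by
  have hstar := star n ℓ f hn hℓ hf c (j+d)
  rw [show j+d-1 = j+(d-1) by ring] at hstar
  unfold psi
  rw [show j+(d-1)+1 = j+d by ring]
  by_cases hd : 0 ≤ d
  · have hsplit := sum_Icc_split (ci c) j (j+(d-1)) (j+d) (by omega) (by omega)
    rw [show j+(d-1)+1 = j+d by ring, Finset.Icc_self, Finset.sum_singleton] at hsplit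
    rw [Finset.Icc_eq_empty (show ¬ (j+d+1 ≤ j-1) by omega), Finset.sum_empty,
      Finset.Icc_eq_empty (show ¬ (j+d ≤ j-1) by omega), Finset.sum_empty]
    omega
  · rw [Finset.Icc_eq_empty (show ¬ (j ≤ j+d) by omega), Finset.sum_empty,
      Finset.Icc_eq_empty (show ¬ (j ≤ j+(d-1)) by omega), Finset.sum_empty]
    have hsplit := sum_Icc_split (ci c) (j+d) (j+d) (j-1) (by omega) (by omega)
    rw [Finset.Icc_self, Finset.sum_singleton] at hsplit
    omega

lemma psi_mono_nat (hn : 1 ≤ n) (hℓ : ℓ ≤ n - 1) (hf : Conserves q n f)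
    (c : ℤ → Fin q) (j d : ℤ) : ∀ m : ℕ, psi n ℓ f c j d ≤ psi n ℓ f c j (d + (m:ℤ)) := by
  intro m
  induction m with
  | zero => simp
  | succ m ih =>
    have hs := psi_succ n ℓ f hn hℓ hf c j (d + (m:ℤ) + 1)
    rw [show d + (m:ℤ) + 1 - 1 = d + (m:ℤ) by ring] at hs
    have := Fc_nonneg n ℓ f c (j + (d + (m:ℤ) + 1))
    push_cast
    rw [show d + ((m:ℤ)+1) = d + (m:ℤ) + 1 by ring]
    omega

lemma psi_mono (hn : 1 ≤ n) (hℓ : ℓ ≤ n - 1) (hf : Conserves q n f)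
    (c : ℤ → Fin q) (j d d' : ℤ) (h : d ≤ d') :
    psi n ℓ f c j d ≤ psi n ℓ f c j d' := by
  have h0 := psi_mono_nat n ℓ f hn hℓ hf c j d (d' - d).toNat
  have h2 : d + (((d' - d).toNat : ℕ) : ℤ) = d' := by omega
  rw [h2] at h0
  exact h0

lemma psi_shift (c : ℤ → Fin q) (j d : ℤ) :
    psi n ℓ f c (j+1) (d-1) = psi n ℓ f c j d - ci c j := by
  unfold psi
  rw [show j+1+(d-1) = j+d by ring, show j+1-1 = j by ring]
  by_cases hd : 0 ≤ d
  · have hsplit := sum_Icc_split (ci c) j j (j+d) (by omega) (by omega)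
    rw [Finset.Icc_self, Finset.sum_singleton] at hsplit
    rw [Finset.Icc_eq_empty (show ¬ (j+d+1 ≤ j) by omega), Finset.sum_empty]
    rw [Finset.Icc_eq_empty (show ¬ (j+d+1 ≤ j-1) by omega), Finset.sum_empty]
    omega
  · rw [Finset.Icc_eq_empty (show ¬ (j+1 ≤ j+d) by omega), Finset.sum_empty,
      Finset.Icc_eq_empty (show ¬ (j ≤ j+d) by omega), Finset.sum_empty]
    have hsplit := sum_Icc_split (ci c) (j+d+1) (j-1) j (by omega) (by omega)
    rw [show j-1+1 = j by ring, Finset.Icc_self, Finset.sum_singleton] at hsplit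
    omega

lemma psi_le_zero (hn : 1 ≤ n) (hℓ : ℓ ≤ n - 1) (hf : Conserves q n f)
    (c : ℤ → Fin q) (j : ℤ) :
    psi n ℓ f c j (-(L0 q n : ℤ) - 1) ≤ 0 := by
  unfold psi
  have hKR := KR n ℓ f hn hℓ hf c (j - (L0 q n : ℤ) - 1)
  rw [show j + (-(L0 q n : ℤ) - 1) = j - (L0 q n : ℤ) - 1 by ring]
  rw [Finset.Icc_eq_empty (show ¬ (j ≤ j - (L0 q n : ℤ) - 1) by
    have : (0:ℤ) ≤ (L0 q n : ℤ) := by positivity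
    omega), Finset.sum_empty]
  rw [show j - (L0 q n : ℤ) - 1 + 1 = j - (L0 q n : ℤ) by ring]
  rw [show j - (L0 q n : ℤ) - 1 + (L0 q n : ℤ) = j - 1 by ring,
    show j - (L0 q n : ℤ) - 1 + 1 = j - (L0 q n : ℤ) by ring] at hKR
  omega

lemma psi_ge_ci (hn : 1 ≤ n) (hℓ : ℓ ≤ n - 1) (hf : Conserves q n f)
    (c : ℤ → Fin q) (j : ℤ) :
    ci c j ≤ psi n ℓ f c j (L0 q n : ℤ) := by
  unfold psi
  have hKL := KL n ℓ f hn hℓ hf c (j + (L0 q n : ℤ))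
  rw [show j + (L0 q n : ℤ) - (L0 q n : ℤ) + 1 = j + 1 by ring] at hKL
  have hL0 : (0:ℤ) ≤ (L0 q n : ℤ) := by positivity
  rw [Finset.Icc_eq_empty (show ¬ (j + (L0 q n:ℤ) + 1 ≤ j - 1) by omega), Finset.sum_empty]
  have hsplit := sum_Icc_split (ci c) j j (j + (L0 q n : ℤ)) (by omega) (by omega)
  rw [Finset.Icc_self, Finset.sum_singleton] at hsplit
  omega

lemma psi_congr (c c' : ℤ → Fin q) (hn : 1 ≤ n) (hℓ : ℓ ≤ n - 1) (j d : ℤ)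
    (hd1 : -(L0 q n : ℤ) - 1 ≤ d) (hd2 : d ≤ (L0 q n : ℤ))
    (h : ∀ x, j - ((LL q n : ℕ) : ℤ) ≤ x → x ≤ j + ((LL q n : ℕ) : ℤ) → c x = c' x) :
    psi n ℓ f c j d = psi n ℓ f c' j d := by
  have hLL : ((LL q n : ℕ) : ℤ) = (L0 q n : ℤ) + (n:ℤ) + 1 := by unfold LL; push_cast; ring
  have hrz : 0 ≤ rz n ℓ ∧ rz n ℓ ≤ (n:ℤ) - 1 ∧ (ℓ:ℤ) ≤ (n:ℤ) - 1 := by unfold rz; omega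
  have hL0 : (0:ℤ) ≤ (L0 q n : ℤ) := by positivity
  unfold psi
  have h1 : ∑ t ∈ Finset.Icc j (j+d), ci c t = ∑ t ∈ Finset.Icc j (j+d), ci c' t := by
    apply Finset.sum_congr rfl
    intro t ht
    simp only [Finset.mem_Icc] at ht
    unfold ci
    rw [h t (by omega) (by omega)]
  have h2 : ∑ t ∈ Finset.Icc (j+d+1) (j-1), ci c t =
      ∑ t ∈ Finset.Icc (j+d+1) (j-1), ci c' t := by
    apply Finset.sum_congr rfl
    intro t ht
    simp only [Finset.mem_Icc] at ht
    unfold ci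
    rw [h t (by omega) (by omega)]
  have h3 : phi n ℓ f c (j+d) = phi n ℓ f c' (j+d) := by
    apply phi_congr
    intro x hx1 hx2
    exact h x (by omega) (by omega)
  rw [h1, h2, h3]

lemma psi_translate (c : ℤ → Fin q) (j d : ℤ) :
    psi n ℓ f (fun x => c (j + x)) 0 d = psi n ℓ f c j d := by
  unfold psi
  have h3 : phi n ℓ f (fun x => c (j + x)) (0 + d) = phi n ℓ f c (j + d) := by
    rw [phi_translate]
    congr 1
    ring
  have h1 : ∑ t ∈ Finset.Icc 0 (0+d), ci (fun x => c (j + x)) t =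
      ∑ t ∈ Finset.Icc j (j+d), ci c t := by
    rw [show (∑ t ∈ Finset.Icc 0 (0+d), ci (fun x => c (j + x)) t) =
        ∑ t ∈ Finset.Icc 0 (0+d), ci c (j + t) from rfl,
      sum_translate (ci c) j 0 (0+d)]
    congr 1 <;> ring
  have h2 : ∑ t ∈ Finset.Icc (0+d+1) (0-1), ci (fun x => c (j + x)) t =
      ∑ t ∈ Finset.Icc (j+d+1) (j-1), ci c t := by
    rw [show (∑ t ∈ Finset.Icc (0+d+1) (0-1), ci (fun x => c (j + x)) t) =
        ∑ t ∈ Finset.Icc (0+d+1) (0-1), ci c (j + t) from rfl,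
      sum_translate (ci c) j (0+d+1) (0-1)]
    congr 1 <;> ring
  rw [h1, h2, h3]

end Psi
end OPP

namespace OPP

variable {q : ℕ} [NeZero q]

/-- rebuild a local configuration from the PA context, centered at 0 -/
def recon (Lp Rp : ℕ) (v : Fin q) (u : Fin Lp → Fin q) (u' : Fin Rp → Fin q) : ℤ → Fin q :=
  fun x =>
    if h1 : 0 ≤ x + (Lp:ℤ) ∧ x ≤ -1 then u ⟨(x + (Lp:ℤ)).toNat, by omega⟩
    else if x = 0 then v
    else if h2 : 1 ≤ x ∧ x ≤ (Rp:ℤ) then u' ⟨(x - 1).toNat, by omega⟩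
    else 0

lemma recon_eq (Lp Rp : ℕ) (c : ℤ → Fin q) (j : ℤ) (x : ℤ)
    (h1 : -(Lp:ℤ) ≤ x) (h2 : x ≤ (Rp:ℤ)) :
    recon Lp Rp (c j) (fun t => c (j - (Lp:ℤ) + ((t:ℕ):ℤ))) (fun t => c (j + 1 + ((t:ℕ):ℤ))) x
      = c (j + x) := by
  unfold recon
  split_ifs with ha hb hc
  · simp only [Fin.val_mk]
    congr 1
    omega
  · rw [hb]
    congr 1
    omega
  · simp only [Fin.val_mk]
    congr 1
    omega
  · exfalso
    omega

section DvalSec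

variable (n ℓ : ℕ) (f : (Fin n → Fin q) → Fin q)

noncomputable def Dset (c : ℤ → Fin q) (k : ℕ) : Finset ℤ :=
  (Finset.Icc (-(LL q n : ℤ)) ((LL q n : ℕ) : ℤ)).filter
    (fun d => (k:ℤ) + 1 ≤ psi n ℓ f c 0 d)

noncomputable def Dval (c : ℤ → Fin q) (k : ℕ) : ℤ :=
  if h : (Dset n ℓ f c k).Nonempty then (Dset n ℓ f c k).min' h else 0

lemma LL_facts : (0:ℤ) ≤ (L0 q n : ℤ) ∧ ((LL q n : ℕ) : ℤ) = (L0 q n : ℤ) + (n:ℤ) + 1 := by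
  constructor
  · positivity
  · unfold LL; push_cast; ring

lemma Dval_crossing (hn : 1 ≤ n) (hℓ : ℓ ≤ n - 1) (hf : Conserves q n f)
    (c : ℤ → Fin q) (k : ℕ) (hk : (k:ℤ) + 1 ≤ ci c 0) :
    psi n ℓ f c 0 (Dval n ℓ f c k - 1) < (k:ℤ) + 1 ∧
    (k:ℤ) + 1 ≤ psi n ℓ f c 0 (Dval n ℓ f c k) ∧
    -(L0 q n : ℤ) ≤ Dval n ℓ f c k ∧ Dval n ℓ f c k ≤ (L0 q n : ℤ) := by
  obtain ⟨hL0, hLL⟩ := LL_facts (q := q) (n := n)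
  have hnz : (1:ℤ) ≤ (n:ℤ) := by exact_mod_cast hn
  have hmemL0 : (L0 q n : ℤ) ∈ Dset n ℓ f c k := by
    unfold Dset
    rw [Finset.mem_filter, Finset.mem_Icc]
    refine ⟨⟨by omega, by omega⟩, ?_⟩
    have := psi_ge_ci n ℓ f hn hℓ hf c 0
    omega
  have hne : (Dset n ℓ f c k).Nonempty := ⟨_, hmemL0⟩
  have hDval : Dval n ℓ f c k = (Dset n ℓ f c k).min' hne := by
    unfold Dval
    rw [dif_pos hne]
  have hmem := (Dset n ℓ f c k).min'_mem hne
  rw [← hDval] at hmem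
  unfold Dset at hmem
  rw [Finset.mem_filter, Finset.mem_Icc] at hmem
  obtain ⟨⟨hb1, hb2⟩, hpsiD⟩ := hmem
  have hleL0 : Dval n ℓ f c k ≤ (L0 q n : ℤ) := by
    rw [hDval]
    exact Finset.min'_le _ _ hmemL0
  have hgeL0 : -(L0 q n : ℤ) ≤ Dval n ℓ f c k := by
    by_contra hcon
    push_neg at hcon
    have h1 : psi n ℓ f c 0 (Dval n ℓ f c k) ≤ psi n ℓ f c 0 (-(L0 q n : ℤ) - 1) :=
      psi_mono n ℓ f hn hℓ hf c 0 _ _ (by omega)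
    have h2 := psi_le_zero n ℓ f hn hℓ hf c 0
    omega
  refine ⟨?_, hpsiD, hgeL0, hleL0⟩
  by_contra hcon
  push_neg at hcon
  have hmem' : Dval n ℓ f c k - 1 ∈ Dset n ℓ f c k := by
    unfold Dset
    rw [Finset.mem_filter, Finset.mem_Icc]
    exact ⟨⟨by omega, by omega⟩, hcon⟩
  have := Finset.min'_le _ _ hmem'
  rw [← hDval] at this
  omega

lemma Dval_eq_iff (hn : 1 ≤ n) (hℓ : ℓ ≤ n - 1) (hf : Conserves q n f)
    (c : ℤ → Fin q) (k : ℕ) (hk : (k:ℤ) + 1 ≤ ci c 0) (d : ℤ) :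
    Dval n ℓ f c k = d ↔
      (psi n ℓ f c 0 (d - 1) < (k:ℤ) + 1 ∧ (k:ℤ) + 1 ≤ psi n ℓ f c 0 d) := by
  obtain ⟨h1, h2, h3, h4⟩ := Dval_crossing n ℓ f hn hℓ hf c k hk
  constructor
  · intro hd
    rw [hd] at h1 h2
    exact ⟨h1, h2⟩
  · rintro ⟨ha, hb⟩
    by_contra hne
    rcases lt_or_gt_of_ne hne with h | h
    · have : psi n ℓ f c 0 (Dval n ℓ f c k) ≤ psi n ℓ f c 0 (d - 1) :=
        psi_mono n ℓ f hn hℓ hf c 0 _ _ (by omega)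
      omega
    · have : psi n ℓ f c 0 d ≤ psi n ℓ f c 0 (Dval n ℓ f c k - 1) :=
        psi_mono n ℓ f hn hℓ hf c 0 _ _ (by omega)
      omega

/-- the particle automaton -/
noncomputable def thePA : PA q (LL q n) (LL q n) where
  g v u u' k := some (Dval n ℓ f (recon (LL q n) (LL q n) v u u') (k : ℕ))
  mem_range := by
    intro v u u' k d hd
    rw [Option.some_inj] at hd
    subst hd
    unfold Dval
    split
    · rename_i h
      have hmem := (Dset n ℓ f _ (k:ℕ)).min'_mem h
      unfold Dset at hmem
      rw [Finset.mem_filter, Finset.mem_Icc] at hmem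
      exact ⟨hmem.1.1, hmem.1.2⟩
    · have : (0:ℤ) ≤ ((LL q n : ℕ) : ℤ) := by positivity
      omega

/-- the `g`-entry of the PA equals `d` iff the crossing condition holds for `psi c j` -/
lemma gval_iff (hn : 1 ≤ n) (hℓ : ℓ ≤ n - 1) (hf : Conserves q n f)
    (c : ℤ → Fin q) (j : ℤ) (k : ℕ) (hk : (k:ℤ) + 1 ≤ ci c j) (d : ℤ) :
    Dval n ℓ f (recon (LL q n) (LL q n) (c j)
      (fun t => c (j - ((LL q n : ℕ):ℤ) + ((t:ℕ):ℤ)))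
      (fun t => c (j + 1 + ((t:ℕ):ℤ)))) k = d ↔
      (psi n ℓ f c j (d - 1) < (k:ℤ) + 1 ∧ (k:ℤ) + 1 ≤ psi n ℓ f c j d) := by
  obtain ⟨hL0, hLL⟩ := LL_facts (q := q) (n := n)
  have hnz : (1:ℤ) ≤ (n:ℤ) := by exact_mod_cast hn
  set chat := recon (LL q n) (LL q n) (c j)
      (fun t => c (j - ((LL q n : ℕ):ℤ) + ((t:ℕ):ℤ)))
      (fun t => c (j + 1 + ((t:ℕ):ℤ))) with hchat
  have hagree : ∀ x, -((LL q n : ℕ):ℤ) ≤ x → x ≤ ((LL q n : ℕ):ℤ) → chat x = c (j + x) := by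
    intro x hx1 hx2
    rw [hchat]
    exact recon_eq (LL q n) (LL q n) c j x hx1 hx2
  have hpsi : ∀ e, -(L0 q n : ℤ) - 1 ≤ e → e ≤ (L0 q n : ℤ) →
      psi n ℓ f chat 0 e = psi n ℓ f c j e := by
    intro e he1 he2
    rw [← psi_translate n ℓ f c j e]
    apply psi_congr n ℓ f _ _ hn hℓ 0 e he1 he2
    intro x h1 h2
    rw [hagree x (by omega) (by omega)]
  have hchat0 : ci chat 0 = ci c j := by
    unfold ci
    rw [hagree 0 (by omega) (by omega), add_zero]
  have hk0 : (k:ℤ) + 1 ≤ ci chat 0 := by omega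
  rw [Dval_eq_iff n ℓ f hn hℓ hf chat k hk0 d]
  -- both conditions imply d in range; transfer psi
  constructor
  · rintro ⟨ha, hb⟩
    have hb1 : -(L0 q n : ℤ) ≤ d := by
      by_contra hcon
      push_neg at hcon
      have h1 : psi n ℓ f chat 0 d ≤ psi n ℓ f chat 0 (-(L0 q n : ℤ) - 1) :=
        psi_mono n ℓ f hn hℓ hf chat 0 _ _ (by omega)
      have h2 := psi_le_zero n ℓ f hn hℓ hf chat 0
      omega
    have hb2 : d ≤ (L0 q n : ℤ) := by
      by_contra hcon
      push_neg at hcon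
      have h1 : psi n ℓ f chat 0 (L0 q n : ℤ) ≤ psi n ℓ f chat 0 (d-1) :=
        psi_mono n ℓ f hn hℓ hf chat 0 _ _ (by omega)
      have h2 := psi_ge_ci n ℓ f hn hℓ hf chat 0
      omega
    rw [hpsi (d-1) (by omega) (by omega)] at ha
    rw [hpsi d (by omega) (by omega)] at hb
    exact ⟨ha, hb⟩
  · rintro ⟨ha, hb⟩
    have hb1 : -(L0 q n : ℤ) ≤ d := by
      by_contra hcon
      push_neg at hcon
      have h1 : psi n ℓ f c j d ≤ psi n ℓ f c j (-(L0 q n : ℤ) - 1) :=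
        psi_mono n ℓ f hn hℓ hf c j _ _ (by omega)
      have h2 := psi_le_zero n ℓ f hn hℓ hf c j
      omega
    have hb2 : d ≤ (L0 q n : ℤ) := by
      by_contra hcon
      push_neg at hcon
      have h1 : psi n ℓ f c j (L0 q n : ℤ) ≤ psi n ℓ f c j (d-1) :=
        psi_mono n ℓ f hn hℓ hf c j _ _ (by omega)
      have h2 := psi_ge_ci n ℓ f hn hℓ hf c j
      omega
    rw [hpsi (d-1) (by omega) (by omega), hpsi d (by omega) (by omega)]
    exact ⟨ha, hb⟩

end DvalSec
end OPP

namespace OPP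

variable {q : ℕ} [NeZero q]

lemma card_window (cj : ℕ) (A B : ℤ) :
    (((Finset.univ.filter fun k : Fin cj => A < (k:ℤ)+1 ∧ (k:ℤ)+1 ≤ B).card : ℕ) : ℤ)
      = max 0 (min B (cj:ℤ) - max A 0) := by
  have hcard : (Finset.univ.filter fun k : Fin cj => A < (k:ℤ)+1 ∧ (k:ℤ)+1 ≤ B).card
      = (Finset.Ico (max A 0) (min B (cj:ℤ))).card := by
    refine Finset.card_bij' (fun (k : Fin cj) _ => ((k:ℕ):ℤ))
      (fun x hx => ⟨x.toNat, by
        simp only [Finset.mem_Ico] at hx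
        omega⟩) ?_ ?_ ?_ ?_
    · intro k hk
      simp only [Finset.mem_filter, Finset.mem_univ, true_and] at hk
      simp only [Finset.mem_Ico]
      have := k.isLt
      omega
    · intro x hx
      simp only [Finset.mem_Ico] at hx
      simp only [Finset.mem_filter, Finset.mem_univ, true_and, Fin.val_mk]
      omega
    · intro k hk
      ext
      simp only [Fin.val_mk]
      omega
    · intro x hx
      simp only [Finset.mem_Ico] at hx
      simp only [Fin.val_mk]
      omega
  rw [hcard, Int.card_Ico]
  omega

section CountSec

variable (n ℓ : ℕ) (f : (Fin n → Fin q) → Fin q)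

lemma count_eq (hn : 1 ≤ n) (hℓ : ℓ ≤ n - 1) (hf : Conserves q n f)
    (c : ℤ → Fin q) (j i : ℤ) :
    (((thePA n ℓ f).count c j i : ℕ) : ℤ) =
      max 0 (min (psi n ℓ f c j (i-j)) (ci c j) - max (psi n ℓ f c j (i-j-1)) 0) := by
  unfold PA.count
  have hg : ∀ k : Fin ((c j : ℕ)),
      ((thePA n ℓ f).g (c j) (fun t => c (j - ((LL q n : ℕ) : ℤ) + ((t:ℕ):ℤ)))
        (fun t => c (j + 1 + ((t:ℕ):ℤ))) k = some (i - j)) ↔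
      (psi n ℓ f c j (i-j-1) < ((k:ℕ):ℤ)+1 ∧ ((k:ℕ):ℤ)+1 ≤ psi n ℓ f c j (i-j)) := by
    intro k
    have hk : ((k:ℕ):ℤ) + 1 ≤ ci c j := by
      have := k.isLt
      unfold ci
      omega
    rw [show (thePA n ℓ f).g (c j) (fun t => c (j - ((LL q n : ℕ) : ℤ) + ((t:ℕ):ℤ)))
        (fun t => c (j + 1 + ((t:ℕ):ℤ))) k = some (Dval n ℓ f
          (recon (LL q n) (LL q n) (c j) (fun t => c (j - ((LL q n : ℕ):ℤ) + ((t:ℕ):ℤ)))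
          (fun t => c (j + 1 + ((t:ℕ):ℤ)))) (k:ℕ)) from rfl, Option.some_inj]
    exact gval_iff n ℓ f hn hℓ hf c j (k:ℕ) hk (i - j)
  rw [Finset.filter_congr (fun k _ => hg k)]
  rw [card_window]
  rfl

/-- the interval-counting identity -/
lemma sum_interval (F : ℤ) (hF0 : 0 ≤ F) (b cv : ℤ → ℤ) (hcv : ∀ j, 0 ≤ cv j)
    (hstep : ∀ j, b (j+1) = b j - cv j) (lo : ℤ) :
    ∀ N : ℕ, ∑ j ∈ Finset.Icc lo (lo + (N:ℤ) - 1), max 0 (min (b j) (cv j) - max (b j - F) 0)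
      = min F (max 0 (b lo)) - min F (max 0 (b (lo + (N:ℤ)))) := by
  intro N
  induction N with
  | zero => simp
  | succ N ih =>
    have hsplit := sum_Icc_split (fun j => max 0 (min (b j) (cv j) - max (b j - F) 0))
      lo (lo + (N:ℤ) - 1) (lo + (N:ℤ)) (by omega) (by omega)
    rw [show lo + (N:ℤ) - 1 + 1 = lo + (N:ℤ) by ring, Finset.Icc_self,
      Finset.sum_singleton] at hsplit
    have hstepN := hstep (lo + (N:ℤ))
    have hcvN := hcv (lo + (N:ℤ))
    have hterm : max 0 (min (b (lo + (N:ℤ))) (cv (lo + (N:ℤ))) - max (b (lo + (N:ℤ)) - F) 0)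
        = min F (max 0 (b (lo + (N:ℤ)))) - min F (max 0 (b (lo + (N:ℤ) + 1))) := by
      omega
    push_cast
    rw [show lo + ((N:ℤ)+1) - 1 = lo + (N:ℤ) by ring, show lo + ((N:ℤ)+1) = lo + (N:ℤ) + 1 by ring]
    omega

lemma psi_L0m1_nonneg (hn : 1 ≤ n) (hℓ : ℓ ≤ n - 1) (hf : Conserves q n f)
    (c : ℤ → Fin q) (j : ℤ) :
    0 ≤ psi n ℓ f c j ((L0 q n : ℤ) - 1) := by
  unfold psi
  have hL0 : (0:ℤ) ≤ (L0 q n : ℤ) := by positivity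
  have hKL := KL n ℓ f hn hℓ hf c (j + ((L0 q n : ℤ) - 1))
  rw [show j + ((L0 q n:ℤ) - 1) - (L0 q n:ℤ) + 1 = j by ring] at hKL
  rw [Finset.Icc_eq_empty (show ¬ (j + ((L0 q n:ℤ)-1) + 1 ≤ j - 1) by omega), Finset.sum_empty]
  omega

lemma sum_count (hn : 1 ≤ n) (hℓ : ℓ ≤ n - 1) (hf : Conserves q n f)
    (c : ℤ → Fin q) (i : ℤ) :
    ∑ j ∈ Finset.Icc (i - (L0 q n : ℤ)) (i + (L0 q n : ℤ)),
      (((thePA n ℓ f).count c j i : ℕ) : ℤ) = Fc n ℓ f c i := by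
  have hL0 : (0:ℤ) ≤ (L0 q n : ℤ) := by positivity
  set F := Fc n ℓ f c i with hF
  have hF0 : 0 ≤ F := Fc_nonneg n ℓ f c i
  set b : ℤ → ℤ := fun j => psi n ℓ f c j (i - j) with hb
  have hstep : ∀ j, b (j+1) = b j - ci c j := by
    intro j
    have := psi_shift n ℓ f c j (i - j)
    rw [hb]
    simp only
    rw [show i - (j+1) = i - j - 1 by ring]
    omega
  have hprev : ∀ j, psi n ℓ f c j (i-j-1) = b j - F := by
    intro j
    have := psi_succ n ℓ f hn hℓ hf c j (i - j)
    rw [show j + (i - j) = i by ring] at this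
    rw [hb]
    simp only
    omega
  have hterm : ∀ j, (((thePA n ℓ f).count c j i : ℕ) : ℤ)
      = max 0 (min (b j) (ci c j) - max (b j - F) 0) := by
    intro j
    rw [count_eq n ℓ f hn hℓ hf c j i, hprev j]
  rw [Finset.sum_congr rfl (fun j _ => hterm j)]
  have hsi := sum_interval F hF0 b (ci c) (fun j => ci_nonneg c j) hstep
    (i - (L0 q n : ℤ)) (2 * (L0 q n) + 1)
  have hcast : ((2 * (L0 q n) + 1 : ℕ) : ℤ) = 2 * (L0 q n : ℤ) + 1 := by push_cast; ring
  rw [hcast, show i - (L0 q n:ℤ) + (2*(L0 q n:ℤ)+1) - 1 = i + (L0 q n:ℤ) by ring,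
    show i - (L0 q n:ℤ) + (2*(L0 q n:ℤ)+1) = i + (L0 q n:ℤ) + 1 by ring] at hsi
  rw [hsi]
  -- start value
  have hstart : F ≤ b (i - (L0 q n:ℤ)) ∧ 0 ≤ b (i - (L0 q n:ℤ)) := by
    have hsucc := psi_succ n ℓ f hn hℓ hf c (i - (L0 q n:ℤ)) ((L0 q n:ℤ))
    rw [show i - (L0 q n:ℤ) + (L0 q n:ℤ) = i by ring] at hsucc
    have hge := psi_L0m1_nonneg n ℓ f hn hℓ hf c (i - (L0 q n:ℤ))
    rw [hb]
    simp only
    rw [show i - (i - (L0 q n:ℤ)) = (L0 q n:ℤ) by ring]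
    omega
  -- end value
  have hend : b (i + (L0 q n:ℤ) + 1) ≤ 0 := by
    have := psi_le_zero n ℓ f hn hℓ hf c (i + (L0 q n:ℤ) + 1)
    rw [hb]
    simp only
    rw [show i - (i + (L0 q n:ℤ) + 1) = -(L0 q n:ℤ) - 1 by ring]
    exact this
  omega

lemma count_support (hn : 1 ≤ n) (hℓ : ℓ ≤ n - 1) (hf : Conserves q n f)
    (c : ℤ → Fin q) (i j : ℤ) (h : (thePA n ℓ f).count c j i ≠ 0) :
    j ∈ Finset.Icc (i - (L0 q n : ℤ)) (i + (L0 q n : ℤ)) := by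
  have hc := count_eq n ℓ f hn hℓ hf c j i
  have h1 : 0 < ((thePA n ℓ f).count c j i : ℤ) := by
    have : 0 < (thePA n ℓ f).count c j i := Nat.pos_of_ne_zero h
    exact_mod_cast this
  rw [Finset.mem_Icc]
  constructor
  · -- i - j ≤ L0 : otherwise psi (i-j-1) ≥ ci c j hence count = 0
    by_contra hcon
    push_neg at hcon
    have hmono : psi n ℓ f c j ((L0 q n : ℤ)) ≤ psi n ℓ f c j (i-j-1) :=
      psi_mono n ℓ f hn hℓ hf c j _ _ (by omega)
    have hge := psi_ge_ci n ℓ f hn hℓ hf c j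
    omega
  · by_contra hcon
    push_neg at hcon
    have hmono : psi n ℓ f c j (i-j) ≤ psi n ℓ f c j (-(L0 q n : ℤ) - 1) :=
      psi_mono n ℓ f hn hℓ hf c j _ _ (by omega)
    have hle := psi_le_zero n ℓ f hn hℓ hf c j
    have := ci_nonneg c j
    omega

lemma finsum_count (hn : 1 ≤ n) (hℓ : ℓ ≤ n - 1) (hf : Conserves q n f)
    (c : ℤ → Fin q) (i : ℤ) :
    (∑ᶠ j : ℤ, (thePA n ℓ f).count c j i) = (Fc n ℓ f c i).toNat := by
  rw [finsum_eq_finset_sum_of_support_subset _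
    (s := Finset.Icc (i - (L0 q n : ℤ)) (i + (L0 q n : ℤ)))]
  · have hz := sum_count n ℓ f hn hℓ hf c i
    have : ((∑ j ∈ Finset.Icc (i - (L0 q n : ℤ)) (i + (L0 q n : ℤ)),
        (thePA n ℓ f).count c j i : ℕ) : ℤ) = Fc n ℓ f c i := by
      push_cast
      exact hz
    omega
  · intro j hj
    exact count_support n ℓ f hn hℓ hf c i j hj

end CountSec
end OPP

namespace OPP

variable {q : ℕ} [NeZero q]

section ShiftMany

variable (n ℓ : ℕ) (f : (Fin n → Fin q) → Fin q)

lemma psi_shift_many (c : ℤ → Fin q) (j d : ℤ) : ∀ m : ℕ,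
    psi n ℓ f c j d = psi n ℓ f c (j + (m:ℤ)) (d - (m:ℤ))
      + ∑ t ∈ Finset.Icc j (j + (m:ℤ) - 1), ci c t := by
  intro m
  induction m with
  | zero => simp
  | succ m ih =>
    have hs := psi_shift n ℓ f c (j + (m:ℤ)) (d - (m:ℤ))
    have hsplit := sum_Icc_split (ci c) j (j + (m:ℤ) - 1) (j + (m:ℤ)) (by omega) (by omega)
    rw [show j + (m:ℤ) - 1 + 1 = j + (m:ℤ) by ring, Finset.Icc_self,
      Finset.sum_singleton] at hsplit
    push_cast
    rw [show j + ((m:ℤ)+1) = j + (m:ℤ) + 1 by ring, show d - ((m:ℤ)+1) = d - (m:ℤ) - 1 by ring,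
      show j + (m:ℤ) + 1 - 1 = j + (m:ℤ) by ring]
    omega

end ShiftMany
end OPP


/-- every conservative CA is the global map of a conservative particle
automaton that preserves the order of the particles: no particle jumps over, or onto the
source of, another moving particle in the opposite relative order. -/
theorem order_preserving_particle_representation
    (q n : ℕ) [NeZero q] (hn : 1 ≤ n)
    (f : (Fin n → Fin q) → Fin q) (hf : Conserves q n f)
    (ℓ : ℕ) (hℓ : ℓ ≤ n - 1)
    (F : (ℤ → Fin q) → ℤ → Fin q)
    (hF : ∀ (c : ℤ → Fin q) (i : ℤ),
      F c i = f (fun t => c (i - (ℓ : ℤ) + ((t : ℕ) : ℤ)))) :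
    ∃ (L R : ℕ) (G : PA q L R),
      G.Conservative ∧
      (∀ (c : ℤ → Fin q) (i : ℤ), G.glob c i = F c i) ∧
      ¬ ∃ (c : ℤ → Fin q) (i₀ j₀ : ℤ) (k : Fin ((c i₀ : ℕ))) (k' : Fin ((c j₀ : ℕ)))
          (d d' : ℤ),
          i₀ ≠ j₀ ∧
          G.g (c i₀) (fun t => c (i₀ - (L : ℤ) + ((t : ℕ) : ℤ)))
            (fun t => c (i₀ + 1 + ((t : ℕ) : ℤ))) k = some d ∧
          G.g (c j₀) (fun t => c (j₀ - (L : ℤ) + ((t : ℕ) : ℤ)))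
            (fun t => c (j₀ + 1 + ((t : ℕ) : ℤ))) k' = some d' ∧
          ((i₀ < j₀ ∧ j₀ ≤ j₀ + d' ∧ j₀ + d' < i₀ + d) ∨
           (i₀ + d < j₀ + d' ∧ j₀ + d' ≤ j₀ ∧ j₀ < i₀)) := by
  classical
  refine ⟨OPP.LL q n, OPP.LL q n, OPP.thePA n ℓ f, ⟨?_, ?_⟩, ?_, ?_⟩
  · intro v u u' k
    exact Option.some_ne_none _
  · intro c i
    rw [OPP.finsum_count n ℓ f hn hℓ hf c i]
    have h1 := OPP.Fc_le n ℓ f c i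
    have h2 := OPP.Fc_nonneg n ℓ f c i
    have hq := Nat.pos_of_ne_zero (NeZero.ne q)
    omega
  · intro c i
    have hval : ((F c i : ℕ) : ℤ) = OPP.Fc n ℓ f c i := by rw [hF]; rfl
    apply Fin.eq_of_val_eq
    show min (q-1) (∑ᶠ j : ℤ, (OPP.thePA n ℓ f).count c j i) = (F c i : ℕ)
    rw [OPP.finsum_count n ℓ f hn hℓ hf c i]
    have := (F c i).isLt
    omega
  · rintro ⟨c, i₀, j₀, k, k', d, d', hne, hg1, hg2, hcase⟩
    -- extract crossing conditions
    have hk : ((k : ℕ) : ℤ) + 1 ≤ OPP.ci c i₀ := by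
      have := k.isLt
      unfold OPP.ci
      omega
    have hk' : ((k' : ℕ) : ℤ) + 1 ≤ OPP.ci c j₀ := by
      have := k'.isLt
      unfold OPP.ci
      omega
    have hd1 : OPP.Dval n ℓ f (OPP.recon (OPP.LL q n) (OPP.LL q n) (c i₀)
        (fun t => c (i₀ - ((OPP.LL q n : ℕ):ℤ) + ((t:ℕ):ℤ)))
        (fun t => c (i₀ + 1 + ((t:ℕ):ℤ)))) (k:ℕ) = d := Option.some_inj.mp hg1
    have hd2 : OPP.Dval n ℓ f (OPP.recon (OPP.LL q n) (OPP.LL q n) (c j₀)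
        (fun t => c (j₀ - ((OPP.LL q n : ℕ):ℤ) + ((t:ℕ):ℤ)))
        (fun t => c (j₀ + 1 + ((t:ℕ):ℤ)))) (k':ℕ) = d' := Option.some_inj.mp hg2
    have hcr1 := (OPP.gval_iff n ℓ f hn hℓ hf c i₀ (k:ℕ) hk d).mp hd1
    have hcr2 := (OPP.gval_iff n ℓ f hn hℓ hf c j₀ (k':ℕ) hk' d').mp hd2
    obtain ⟨h1a, h1b⟩ := hcr1
    obtain ⟨h2a, h2b⟩ := hcr2
    rcases hcase with ⟨hlt, hge, hjump⟩ | ⟨hjump, hge, hlt⟩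
    · -- i₀ < j₀ ≤ j₀ + d' < i₀ + d
      set m : ℕ := (j₀ - i₀).toNat with hm_def
      have hm : ((m : ℕ) : ℤ) = j₀ - i₀ := by omega
      have hsm := OPP.psi_shift_many n ℓ f c i₀ (d-1) m
      rw [hm, show i₀ + (j₀ - i₀) = j₀ by ring, show d - 1 - (j₀ - i₀) = i₀ + d - 1 - j₀ by ring] at hsm
      have hmono : OPP.psi n ℓ f c j₀ d' ≤ OPP.psi n ℓ f c j₀ (i₀ + d - 1 - j₀) :=
        OPP.psi_mono n ℓ f hn hℓ hf c j₀ _ _ (by omega)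
      have hdelta : OPP.ci c i₀ ≤ ∑ t ∈ Finset.Icc i₀ (j₀ - 1), OPP.ci c t :=
        Finset.single_le_sum (fun t _ => OPP.ci_nonneg c t)
          (Finset.mem_Icc.mpr ⟨le_refl _, by omega⟩)
      omega
    · -- i₀ + d < j₀ + d' ≤ j₀ < i₀
      set m : ℕ := (i₀ - j₀).toNat with hm_def
      have hm : ((m : ℕ) : ℤ) = i₀ - j₀ := by omega
      have hsm := OPP.psi_shift_many n ℓ f c j₀ (i₀ + d - j₀) m
      rw [hm, show j₀ + (i₀ - j₀) = i₀ by ring,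
        show i₀ + d - j₀ - (i₀ - j₀) = d by ring] at hsm
      have hmono : OPP.psi n ℓ f c j₀ (i₀ + d - j₀) ≤ OPP.psi n ℓ f c j₀ (d' - 1) :=
        OPP.psi_mono n ℓ f hn hℓ hf c j₀ _ _ (by omega)
      have hdelta : OPP.ci c j₀ ≤ ∑ t ∈ Finset.Icc j₀ (i₀ - 1), OPP.ci c t :=
        Finset.single_le_sum (fun t _ => OPP.ci_nonneg c t)
          (Finset.mem_Icc.mpr ⟨le_refl _, by omega⟩)
      omega
end

section
/- There exists a conservative local rule f ∈ CA^0(2,5) (with states Q = {0,1}) such that for every offset 0 ≤ ℓ ≤ 4 and every particle automaton G whose global map equals the CA F(c)_i = f(c_{i−ℓ},…,c_{i+4−ℓ}), the PA G exhibits anticipation: there exist a configuration c ∈ Q^ℤ and positions i ≠ j with c_i = 1, c_j = 1, such that some entry of g_{c_j}(c_{j−L},…,c_{j−1}, c_{j+1},…,c_{j+R}) equals i − j (a particle moves onto an occupied cell). -/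
/-! ### Auxiliary definitions: an explicit conservative rule -/

/-- Truth table of our local rule, indexed lexicographically. -/
def ftbl : List (Fin 2) := [0,0,0,0,0,0,1,1,1,1,0,1,1,0,1,1,0,0,0,0,1,1,1,1,0,0,0,1,1,0,1,1]

/-- Flux function table. -/
def Jtbl : List ℤ := [0,0,0,0,1,1,0,0,0,0,1,0,0,1,0,0]

def F5 (a b c d e : Fin 2) : Fin 2 := ftbl.getD (a.val*16+b.val*8+c.val*4+d.val*2+e.val) 0

def J4 (a b c d : Fin 2) : ℤ := Jtbl.getD (a.val*8+b.val*4+c.val*2+d.val) 0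

/-- Our local rule as a function on windows. -/
def myf : (Fin 5 → Fin 2) → Fin 2 := fun v =>
  F5 (v ⟨0, by norm_num⟩) (v ⟨1, by norm_num⟩) (v ⟨2, by norm_num⟩) (v ⟨3, by norm_num⟩)
     (v ⟨4, by norm_num⟩)

lemma fid : ∀ a b c d e : Fin 2, ((F5 a b c d e : ℤ)) = (c : ℤ) + J4 a b c d - J4 b c d e := by
  decide

lemma sum_shift (p : ℕ) (u : ℤ → ℤ) (hper : ∀ i : ℤ, u (i + (p : ℤ)) = u i) :
    ∑ k ∈ Finset.range p, u ((k : ℤ) + 1) = ∑ k ∈ Finset.range p, u (k : ℤ) := by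
  have h1 := Finset.sum_range_succ (fun k : ℕ => u (k : ℤ)) p
  have h2 := Finset.sum_range_succ' (fun k : ℕ => u (k : ℤ)) p
  norm_num at h1 h2
  have hup : u ((p : ℕ) : ℤ) = u 0 := by
    have := hper 0
    rwa [zero_add] at this
  rw [h2, hup] at h1
  omega

lemma conserves_myf : Conserves 2 5 myf := by
  intro p hp w hper
  set A : ℤ → ℤ := fun x => J4 (w x) (w (x+1)) (w (x+2)) (w (x+3)) with hA
  have hAper : ∀ i : ℤ, A (i + (p : ℤ)) = A i := by
    intro i
    simp only [hA]
    rw [show i + (p:ℤ) + 1 = (i+1) + (p:ℤ) by ring, show i + (p:ℤ) + 2 = (i+2) + (p:ℤ) by ring,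
        show i + (p:ℤ) + 3 = (i+3) + (p:ℤ) by ring, hper, hper, hper, hper]
  have hterm : ∀ k : ℤ, ((myf (fun t => w (k + ((t : ℕ) : ℤ)))) : ℤ)
      = (w (k + 2) : ℤ) + A k - A (k + 1) := by
    intro k
    show ((F5 (w (k + ((0:ℕ):ℤ))) (w (k + ((1:ℕ):ℤ))) (w (k + ((2:ℕ):ℤ))) (w (k + ((3:ℕ):ℤ)))
      (w (k + ((4:ℕ):ℤ))) : ℤ)) = _
    rw [fid]
    have e0 : k + ((0:ℕ):ℤ) = k := by norm_num
    have e1 : k + ((1:ℕ):ℤ) = k + 1 := by norm_num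
    have e2 : k + ((2:ℕ):ℤ) = k + 2 := by norm_num
    have e3 : k + ((3:ℕ):ℤ) = k + 3 := by norm_num
    have e4 : k + ((4:ℕ):ℤ) = k + 4 := by norm_num
    rw [e0, e1, e2, e3, e4]
    simp only [hA]
    rw [show k + 1 + 1 = k + 2 by ring, show k + 1 + 2 = k + 3 by ring,
        show k + 1 + 3 = k + 4 by ring]
  calc ∑ k ∈ Finset.range p, ((myf (fun t => w ((k : ℤ) + ((t : ℕ) : ℤ)))) : ℤ)
      = ∑ k ∈ Finset.range p, ((w ((k:ℤ) + 2) : ℤ) + A (k:ℤ) - A ((k:ℤ) + 1)) := by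
        exact Finset.sum_congr rfl (fun k _ => hterm k)
    _ = (∑ k ∈ Finset.range p, (w ((k:ℤ) + 2) : ℤ)) + ((∑ k ∈ Finset.range p, A (k:ℤ))
          - ∑ k ∈ Finset.range p, A ((k:ℤ) + 1)) := by
        rw [Finset.sum_sub_distrib, Finset.sum_add_distrib]; ring
    _ = ∑ k ∈ Finset.range p, ((w (k : ℤ)) : ℤ) := by
        rw [sum_shift p A hAper]
        have hu : ∀ i : ℤ, ((w (i + (p:ℤ)) : ℤ)) = (w i : ℤ) := fun i => by rw [hper]
        have s1 : ∑ k ∈ Finset.range p, (w ((k:ℤ) + 1 + 1) : ℤ)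
            = ∑ k ∈ Finset.range p, (w ((k:ℤ) + 1) : ℤ) := by
          have := sum_shift p (fun x => (w (x + 1) : ℤ))
            (fun i => by rw [show i + (p:ℤ) + 1 = (i+1) + (p:ℤ) by ring, hper])
          simpa using this
        have s2 := sum_shift p (fun x => (w x : ℤ)) hu
        simp only [show ∀ k : ℤ, k + 2 = k + 1 + 1 from fun k => by ring]
        rw [s1, s2]
        ring

/-! ### The key forcing lemma -/

lemma key {L R : ℕ} (G : PA 2 L R) (c : ℤ → Fin 2) (X S : Finset ℤ)
    (hc : ∀ x : ℤ, c x = 1 ↔ x ∈ X)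
    (hglob : ∀ i ∈ S, G.glob c i = 1)
    (hcard : X.card ≤ S.card)
    (x₀ : ℤ) (hx₀ : x₀ ∈ X)
    (hS : ∀ i ∈ S, -(L:ℤ) ≤ i - x₀ → i - x₀ ≤ (R:ℤ) → i ∈ X ∧ i ≠ x₀) :
    ∃ i j : ℤ, i ≠ j ∧ c i = 1 ∧ c j = 1 ∧
      ∃ k : Fin ((c j : ℕ)),
        G.g (c j) (fun t => c (j - (L : ℤ) + ((t : ℕ) : ℤ)))
          (fun t => c (j + 1 + ((t : ℕ) : ℤ))) k = some (i - j) := by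
  classical
  have hsrc : ∀ i ∈ S, ∃ j : ℤ, G.count c j i ≠ 0 := by
    intro i hi
    by_contra h
    push_neg at h
    have hz : (∑ᶠ j : ℤ, G.count c j i) = 0 :=
      finsum_eq_zero_of_forall_eq_zero (by simpa using h)
    have h1 : (G.glob c i : ℕ) = 1 := by rw [hglob i hi]; rfl
    have h2 : min (2-1) (∑ᶠ j : ℤ, G.count c j i) = 1 := h1
    rw [hz] at h2
    norm_num at h2
  have hext : ∀ (j i : ℤ), G.count c j i ≠ 0 →
      ∃ k : Fin ((c j : ℕ)),
        G.g (c j) (fun t => c (j - (L : ℤ) + ((t : ℕ) : ℤ)))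
          (fun t => c (j + 1 + ((t : ℕ) : ℤ))) k = some (i - j) := by
    intro j i hne
    have hpos : 0 < (Finset.univ.filter fun k : Fin ((c j : ℕ)) =>
        G.g (c j) (fun t => c (j - (L : ℤ) + ((t : ℕ) : ℤ)))
          (fun t => c (j + 1 + ((t : ℕ) : ℤ))) k = some (i - j)).card :=
      Nat.pos_of_ne_zero hne
    obtain ⟨k, hk⟩ := Finset.card_pos.mp hpos
    exact ⟨k, (Finset.mem_filter.mp hk).2⟩
  have hcj : ∀ (j i : ℤ), G.count c j i ≠ 0 → c j = 1 := by
    intro j i hne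
    obtain ⟨k, _⟩ := hext j i hne
    have h1 : k.val < (c j : ℕ) := k.isLt
    have h2 : (c j : ℕ) < 2 := (c j).isLt
    exact Fin.ext (by omega)
  choose src hsrc' using hsrc
  have hXmem : ∀ (i : ℤ) (hi : i ∈ S), src i hi ∈ X := fun i hi =>
    (hc _).mp (hcj _ i (hsrc' i hi))
  have hinj : ∀ (i₁ i₂ : ℤ) (h₁ : i₁ ∈ S) (h₂ : i₂ ∈ S),
      src i₁ h₁ = src i₂ h₂ → i₁ = i₂ := by
    intro i₁ i₂ h₁ h₂ heq
    set j := src i₁ h₁ with hj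
    obtain ⟨k₁, hk₁⟩ := hext j i₁ (hsrc' i₁ h₁)
    obtain ⟨k₂, hk₂⟩ := hext j i₂ (by rw [heq]; exact hsrc' i₂ h₂)
    have hc1 : (c j : ℕ) = 1 := by
      have := hcj j i₁ (hsrc' i₁ h₁); rw [this]; rfl
    have hkk : k₁ = k₂ := by
      have e1 : k₁.val < (c j : ℕ) := k₁.isLt
      have e2 : k₂.val < (c j : ℕ) := k₂.isLt
      exact Fin.ext (by omega)
    rw [hkk, hk₂] at hk₁
    have := Option.some.inj hk₁
    omega
  obtain ⟨i, hiS, hieq⟩ :=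
    Finset.surj_on_of_inj_on_of_card_le (fun i hi => src i hi) hXmem hinj hcard x₀ hx₀
  obtain ⟨k, hk⟩ := hext x₀ i (by rw [hieq]; exact hsrc' i hiS)
  have hrange := G.mem_range _ _ _ _ _ hk
  obtain ⟨hiX, hine⟩ := hS i hiS hrange.1 hrange.2
  exact ⟨i, x₀, hine, (hc i).mpr hiX, (hc x₀).mpr hx₀, ⟨k, hk⟩⟩

/-! ### Evaluation of the rule on the two test configurations -/

lemma block_eval (N w : ℤ) (hN : 5 ≤ N) :
    myf (fun t => if 0 ≤ w + ((t:ℕ):ℤ) ∧ w + ((t:ℕ):ℤ) ≤ N then (1 : Fin 2) else 0) =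
    if -2 ≤ w ∧ w ≤ N - 2 then 1 else 0 := by
  show F5 (if 0 ≤ w + ((0:ℕ):ℤ) ∧ w + ((0:ℕ):ℤ) ≤ N then (1 : Fin 2) else 0)
      (if 0 ≤ w + ((1:ℕ):ℤ) ∧ w + ((1:ℕ):ℤ) ≤ N then (1 : Fin 2) else 0)
      (if 0 ≤ w + ((2:ℕ):ℤ) ∧ w + ((2:ℕ):ℤ) ≤ N then (1 : Fin 2) else 0)
      (if 0 ≤ w + ((3:ℕ):ℤ) ∧ w + ((3:ℕ):ℤ) ≤ N then (1 : Fin 2) else 0)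
      (if 0 ≤ w + ((4:ℕ):ℤ) ∧ w + ((4:ℕ):ℤ) ≤ N then (1 : Fin 2) else 0) = _
  push_cast
  split_ifs <;> first | rfl | (exfalso; omega)

lemma alt_eval (M w : ℤ) (hM : 5 ≤ M) :
    myf (fun t => if 0 ≤ w + ((t:ℕ):ℤ) ∧ w + ((t:ℕ):ℤ) ≤ 2*M ∧ (w + ((t:ℕ):ℤ)) % 2 = 0
        then (1 : Fin 2) else 0) =
    if (0 ≤ w ∧ w ≤ 2*M - 2 ∧ w % 2 = 0) ∨ w = 2*M - 1 then 1 else 0 := by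
  show F5 (if 0 ≤ w + ((0:ℕ):ℤ) ∧ w + ((0:ℕ):ℤ) ≤ 2*M ∧ (w + ((0:ℕ):ℤ)) % 2 = 0 then (1 : Fin 2) else 0)
      (if 0 ≤ w + ((1:ℕ):ℤ) ∧ w + ((1:ℕ):ℤ) ≤ 2*M ∧ (w + ((1:ℕ):ℤ)) % 2 = 0 then (1 : Fin 2) else 0)
      (if 0 ≤ w + ((2:ℕ):ℤ) ∧ w + ((2:ℕ):ℤ) ≤ 2*M ∧ (w + ((2:ℕ):ℤ)) % 2 = 0 then (1 : Fin 2) else 0)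
      (if 0 ≤ w + ((3:ℕ):ℤ) ∧ w + ((3:ℕ):ℤ) ≤ 2*M ∧ (w + ((3:ℕ):ℤ)) % 2 = 0 then (1 : Fin 2) else 0)
      (if 0 ≤ w + ((4:ℕ):ℤ) ∧ w + ((4:ℕ):ℤ) ≤ 2*M ∧ (w + ((4:ℕ):ℤ)) % 2 = 0 then (1 : Fin 2) else 0) = _
  push_cast
  split_ifs <;> first | rfl | (exfalso; omega)

/-! ### The main theorem -/

/-- there exists a conservative rule in `CA^0(2,5)` for which anticipation
is intrinsic: for every offset `ℓ ∈ {0,…,4}`, every particle automaton whose global map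
is the corresponding CA sends, on some configuration, a particle onto an occupied cell. -/
theorem exists_intrinsically_anticipating_rule :
    ∃ f : (Fin 5 → Fin 2) → Fin 2, Conserves 2 5 f ∧
      ∀ ℓ : ℕ, ℓ ≤ 4 →
        ∀ (L R : ℕ) (G : PA 2 L R),
          (∀ (c : ℤ → Fin 2) (i : ℤ),
            G.glob c i = f (fun t => c (i - (ℓ : ℤ) + ((t : ℕ) : ℤ)))) →
          ∃ (c : ℤ → Fin 2) (i j : ℤ), i ≠ j ∧ c i = 1 ∧ c j = 1 ∧
            ∃ k : Fin ((c j : ℕ)),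
              G.g (c j) (fun t => c (j - (L : ℤ) + ((t : ℕ) : ℤ)))
                (fun t => c (j + 1 + ((t : ℕ) : ℤ))) k = some (i - j) := by
  refine ⟨myf, conserves_myf, ?_⟩
  intro ℓ hℓ L R G hG
  by_cases hl2 : ℓ = 2
  · -- alternating configuration, moves right by 2
    subst hl2
    set M : ℤ := (L:ℤ) + (R:ℤ) + 10 with hM
    have hM5 : 5 ≤ M := by omega
    set c : ℤ → Fin 2 := fun x => if 0 ≤ x ∧ x ≤ 2*M ∧ x % 2 = 0 then 1 else 0 with hcdef
    set X : Finset ℤ := (Finset.Icc 0 (2*M)).filter (fun x => x % 2 = 0) with hX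
    set S : Finset ℤ := insert (2*M+1) ((Finset.Icc 2 (2*M)).filter (fun x => x % 2 = 0)) with hSdef
    have hc : ∀ x : ℤ, c x = 1 ↔ x ∈ X := by
      intro x
      simp only [hcdef, hX, Finset.mem_filter, Finset.mem_Icc]
      split_ifs with hx
      · simp only [true_iff]; omega
      · constructor
        · intro h; exact absurd h (by decide)
        · intro h; exact absurd (by omega : 0 ≤ x ∧ x ≤ 2*M ∧ x % 2 = 0) hx
    refine ⟨c, key G c X S hc ?_ ?_ 0 ?_ ?_⟩
    · -- hglob
      intro i hi
      rw [hG c i]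
      have heval := alt_eval M (i - ((2:ℕ):ℤ)) hM5
      show myf (fun t => if 0 ≤ (i - ((2:ℕ):ℤ)) + ((t:ℕ):ℤ) ∧
          (i - ((2:ℕ):ℤ)) + ((t:ℕ):ℤ) ≤ 2*M ∧ ((i - ((2:ℕ):ℤ)) + ((t:ℕ):ℤ)) % 2 = 0
          then (1 : Fin 2) else 0) = 1
      rw [heval]
      rw [if_pos]
      simp only [hSdef, Finset.mem_insert, Finset.mem_filter, Finset.mem_Icc] at hi
      push_cast
      omega
    · -- card
      apply Finset.card_le_card_of_injOn (fun x => if x = 2*M then 2*M+1 else x + 2)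
      · intro a ha
        simp only [hX, Finset.mem_coe, Finset.mem_filter, Finset.mem_Icc] at ha
        simp only [hSdef, Finset.mem_coe, Finset.mem_insert, Finset.mem_filter, Finset.mem_Icc]
        split_ifs with h
        · left; rfl
        · right; omega
      · intro a ha b hb h
        simp only [hX, Finset.coe_filter, Set.mem_setOf_eq, Finset.mem_Icc] at ha hb
        simp only at h
        split_ifs at h with h1 h2 h2 <;> omega
    · -- x₀ ∈ X
      simp only [hX, Finset.mem_filter, Finset.mem_Icc]
      omega
    · -- hS
      intro i hi h1 h2
      simp only [hSdef, Finset.mem_insert, Finset.mem_filter, Finset.mem_Icc] at hi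
      simp only [hX, Finset.mem_filter, Finset.mem_Icc]
      omega
  · -- block configuration, moves by ℓ - 2 ≠ 0
    set N : ℤ := (L:ℤ) + (R:ℤ) + 10 with hN
    have hN5 : 5 ≤ N := by omega
    set c : ℤ → Fin 2 := fun x => if 0 ≤ x ∧ x ≤ N then 1 else 0 with hcdef
    set X : Finset ℤ := Finset.Icc 0 N with hX
    set S : Finset ℤ := Finset.Icc ((ℓ:ℤ) - 2) (N + (ℓ:ℤ) - 2) with hSdef
    have hc : ∀ x : ℤ, c x = 1 ↔ x ∈ X := by
      intro x
      simp only [hcdef, hX, Finset.mem_Icc]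
      split_ifs with hx
      · simp only [true_iff]; omega
      · constructor
        · intro h; exact absurd h (by decide)
        · intro h; exact absurd (by omega : 0 ≤ x ∧ x ≤ N) hx
    have hglob : ∀ i ∈ S, G.glob c i = 1 := by
      intro i hi
      rw [hG c i]
      have heval := block_eval N (i - ((ℓ:ℕ):ℤ)) hN5
      show myf (fun t => if 0 ≤ (i - ((ℓ:ℕ):ℤ)) + ((t:ℕ):ℤ) ∧
          (i - ((ℓ:ℕ):ℤ)) + ((t:ℕ):ℤ) ≤ N then (1 : Fin 2) else 0) = 1
      rw [heval]
      rw [if_pos]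
      simp only [hSdef, Finset.mem_Icc] at hi
      omega
    have hcard : X.card ≤ S.card := by
      apply Finset.card_le_card_of_injOn (fun x => x + ((ℓ:ℤ) - 2))
      · intro a ha
        simp only [hX, Finset.mem_coe, Finset.mem_Icc] at ha
        simp only [hSdef, Finset.mem_coe, Finset.mem_Icc]
        omega
      · intro a _ b _ h
        simp only at h
        omega
    rcases le_or_gt ℓ 1 with hl1 | hl1
    · -- trailing particle at the right end N
      refine ⟨c, key G c X S hc hglob hcard N ?_ ?_⟩
      · simp only [hX, Finset.mem_Icc]; omega
      · intro i hi h1 h2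
        simp only [hSdef, Finset.mem_Icc] at hi
        simp only [hX, Finset.mem_Icc]
        omega
    · -- ℓ ≥ 3 : trailing particle at the left end 0
      have hl3 : 3 ≤ ℓ := by omega
      refine ⟨c, key G c X S hc hglob hcard 0 ?_ ?_⟩
      · simp only [hX, Finset.mem_Icc]; omega
      · intro i hi h1 h2
        simp only [hSdef, Finset.mem_Icc] at hi
        simp only [hX, Finset.mem_Icc]
        omega
end

section
/- Let Q = {0,…,q−1} with q ≥ 2, let f : Q^n → Q be conservative (f ∈ CA^0(q,n)), let 0 ≤ ℓ ≤ n−1, r = n−1−ℓ, and let F : Q^ℤ → Q^ℤ be the CA F(c)_i = f(c_{i−ℓ},…,c_{i+r}). Suppose there exists a non-anticipating particle automaton G whose global map equals F, i.e. a PA such that for every configuration c ∈ Q^ℤ and every cell i, the number of particles arriving at i from cells j ≠ i is at most q − 1 − c_i. Then the offset satisfies ℓ·(q−1) = ∑_{i=1}^{n−1} f(0^i, (q−1)^{n−i}), where 0^i denotes i consecutive zeros and (q−1)^{n−i} denotes n−i consecutive copies of q−1. -/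
namespace PA

variable {q L R : ℕ}

-- Auxiliary definitions and lemmas
def dag (A : PA q L R) (c : ℤ → Fin q) (j : ℤ) : ℕ :=
  (Finset.univ.filter fun k : Fin ((c j : ℕ)) =>
    A.g (c j) (fun t => c (j - (L : ℤ) + ((t : ℕ) : ℤ)))
      (fun t => c (j + 1 + ((t : ℕ) : ℤ))) k = none).card

noncomputable def dep (A : PA q L R) (c : ℤ → Fin q) (j : ℤ) : ℕ :=
  ∑ i ∈ Finset.Icc (j - (L : ℤ)) (j + (R : ℤ)), A.count c j i

noncomputable def arr (A : PA q L R) (c : ℤ → Fin q) (i : ℤ) : ℕ :=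
  ∑ j ∈ Finset.Icc (i - (R : ℤ)) (i + (L : ℤ)), A.count c j i

lemma count_le (A : PA q L R) (c : ℤ → Fin q) (j i : ℤ) :
    A.count c j i ≤ (c j : ℕ) := by
  classical
  calc A.count c j i ≤ (Finset.univ : Finset (Fin ((c j : ℕ)))).card :=
        Finset.card_filter_le _ _
    _ = (c j : ℕ) := by simp

lemma count_eq_zero (A : PA q L R) (c : ℤ → Fin q) {j i : ℤ}
    (h : i - j < -(L : ℤ) ∨ (R : ℤ) < i - j) : A.count c j i = 0 := by
  classical
  rw [count, Finset.card_eq_zero, Finset.filter_eq_empty_iff]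
  intro k _ hk
  have := A.mem_range _ _ _ _ _ hk
  omega

lemma finsum_count (A : PA q L R) (c : ℤ → Fin q) (i : ℤ) :
    ∑ᶠ j : ℤ, A.count c j i = A.arr c i := by
  classical
  apply finsum_eq_sum_of_support_subset
  intro j hj
  simp only [Function.mem_support] at hj
  simp only [Finset.coe_Icc, Set.mem_Icc]
  by_contra hc
  exact hj (A.count_eq_zero c (by omega))

lemma finsum_count' (A : PA q L R) (c : ℤ → Fin q) (i : ℤ) :
    (∑ᶠ j : ℤ, if j = i then 0 else A.count c j i)
      = ∑ j ∈ Finset.Icc (i - (R : ℤ)) (i + (L : ℤ)),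
          (if j = i then 0 else A.count c j i) := by
  classical
  apply finsum_eq_sum_of_support_subset
  intro j hj
  simp only [Function.mem_support] at hj
  simp only [Finset.coe_Icc, Set.mem_Icc]
  by_contra hc
  have hji : j ≠ i := by intro h; subst h; simp at hj
  rw [if_neg hji] at hj
  exact hj (A.count_eq_zero c (by omega))

lemma sum_card_filter_some {m : ℕ} (g0 : Fin m → Option ℤ) (a b j : ℤ)
    (hrange : ∀ k d, g0 k = some d → a ≤ j + d ∧ j + d ≤ b) :
    (∑ i ∈ Finset.Icc a b, (Finset.univ.filter fun k => g0 k = some (i - j)).card)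
      + (Finset.univ.filter fun k => g0 k = none).card = m := by
  classical
  have h1 : (Finset.univ.filter fun k => ¬ (g0 k = none)).card
      = ∑ i ∈ Finset.Icc a b, (Finset.univ.filter fun k => g0 k = some (i - j)).card := by
    rw [Finset.card_eq_sum_card_fiberwise (f := fun k => j + (g0 k).getD 0)
      (t := Finset.Icc a b) ?_]
    · refine Finset.sum_congr rfl fun i _ => ?_
      congr 1
      ext k
      simp only [Finset.mem_filter, Finset.mem_univ, true_and]
      rcases hd : g0 k with _ | d <;> simp [hd]
      omega
    · intro k hk
      simp only [Finset.mem_coe, Finset.mem_filter, Finset.mem_univ, true_and] at hk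
      rcases hd : g0 k with _ | d
      · exact absurd hd hk
      · have := hrange k d hd
        simp only [hd, Option.getD_some, Finset.mem_coe, Finset.mem_Icc]
        omega
  have h2 := Finset.card_filter_add_card_filter_not
    (s := (Finset.univ : Finset (Fin m))) (p := fun k => g0 k = none)
  simp only [Finset.card_univ, Fintype.card_fin] at h2
  omega

lemma dep_add_dag (A : PA q L R) (c : ℤ → Fin q) (j : ℤ) :
    A.dep c j + A.dag c j = (c j : ℕ) := by
  classical
  rw [dep, dag]
  have := sum_card_filter_some
    (fun k : Fin ((c j : ℕ)) =>
      A.g (c j) (fun t => c (j - (L : ℤ) + ((t : ℕ) : ℤ)))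
        (fun t => c (j + 1 + ((t : ℕ) : ℤ))) k)
    (j - (L : ℤ)) (j + (R : ℤ)) j ?_
  · simpa only [count] using this
  · intro k d hd
    have := A.mem_range _ _ _ _ _ hd
    omega

lemma count_congr (A : PA q L R) (c c' : ℤ → Fin q) {j j' i i' : ℤ}
    (h0 : c j = c' j')
    (hL : ∀ t : Fin L, c (j - (L : ℤ) + ((t : ℕ) : ℤ)) = c' (j' - (L : ℤ) + ((t : ℕ) : ℤ)))
    (hR : ∀ t : Fin R, c (j + 1 + ((t : ℕ) : ℤ)) = c' (j' + 1 + ((t : ℕ) : ℤ)))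
    (hd : i - j = i' - j') :
    A.count c j i = A.count c' j' i' := by
  classical
  rw [count, count, ← hd]
  have hLf : (fun t : Fin L => c' (j' - (L : ℤ) + ((t : ℕ) : ℤ)))
      = fun t : Fin L => c (j - (L : ℤ) + ((t : ℕ) : ℤ)) := (funext hL).symm
  have hRf : (fun t : Fin R => c' (j' + 1 + ((t : ℕ) : ℤ)))
      = fun t : Fin R => c (j + 1 + ((t : ℕ) : ℤ)) := (funext hR).symm
  rw [hLf, hRf, h0]

end PA

section Helpers

lemma sum_shift_periodic (p : ℕ) (g : ℤ → ℕ) (hper : ∀ x : ℤ, g (x + p) = g x) :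
    ∀ s : ℤ, ∑ k ∈ Finset.range p, g (s + k) = ∑ k ∈ Finset.range p, g k := by
  have key : ∀ s : ℤ, ∑ k ∈ Finset.range p, g ((s + 1) + k) = ∑ k ∈ Finset.range p, g (s + k) := by
    intro s
    have h1 : ∑ k ∈ Finset.range (p + 1), g (s + k) =
        ∑ k ∈ Finset.range p, g (s + k) + g (s + p) := by
      rw [Finset.sum_range_succ]
    have h2 : ∑ k ∈ Finset.range (p + 1), g (s + k) =
        ∑ k ∈ Finset.range p, g ((s + 1) + k) + g s := by
      rw [Finset.sum_range_succ']
      congr 1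
      · refine Finset.sum_congr rfl fun k _ => ?_
        congr 1; push_cast; ring
      · congr 1; simp
    have h3 : g (s + p) = g s := hper s
    omega
  intro s
  induction s using Int.induction_on with
  | zero => simp
  | succ i ih => rw [key i, ih]
  | pred i ih => rw [← ih, ← key (-(i:ℤ) - 1)]; norm_num

lemma sum_Ico_int (g : ℤ → ℕ) (s : ℤ) (m : ℕ) :
    ∑ i ∈ Finset.Ico s (s + (m : ℤ)), g i = ∑ k ∈ Finset.range m, g (s + k) := by
  classical
  have himg : Finset.Ico s (s + (m : ℤ)) = (Finset.range m).image (fun k : ℕ => s + (k : ℤ)) := by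
    ext x
    simp only [Finset.mem_Ico, Finset.mem_image, Finset.mem_range]
    constructor
    · intro hx; exact ⟨(x - s).toNat, by omega, by omega⟩
    · rintro ⟨k, hk, rfl⟩; omega
  rw [himg, Finset.sum_image (by intro a _ b _ h; have h' : s + (a : ℤ) = s + (b : ℤ) := h; omega)]

lemma sum_eq_sum_of_zero_off (s t : Finset ℤ) (g : ℤ → ℕ)
    (h1 : ∀ x ∈ s, x ∉ t → g x = 0) (h2 : ∀ x ∈ t, x ∉ s → g x = 0) :
    ∑ x ∈ s, g x = ∑ x ∈ t, g x := by
  classical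
  have a1 : ∑ x ∈ s, g x = ∑ x ∈ s ∪ t, g x :=
    Finset.sum_subset Finset.subset_union_left
      (fun x hx hxs => h2 x ((Finset.mem_union.mp hx).resolve_left hxs) hxs)
  have a2 : ∑ x ∈ t, g x = ∑ x ∈ s ∪ t, g x :=
    Finset.sum_subset Finset.subset_union_right
      (fun x hx hxt => h1 x ((Finset.mem_union.mp hx).resolve_right hxt) hxt)
  rw [a1, a2]

lemma sum_Ioc_eq_range (h : ℕ → ℕ) (a b : ℕ) :
    ∑ t ∈ Finset.Ioc a b, h t = ∑ k ∈ Finset.range (b - a), h (a + 1 + k) := by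
  refine Finset.sum_nbij' (fun t => t - a - 1) (fun k => a + 1 + k) ?_ ?_ ?_ ?_ ?_
  · intro t ht; simp only [Finset.mem_Ioc] at ht; simp only [Finset.mem_range]; omega
  · intro k hk; simp only [Finset.mem_range] at hk; simp only [Finset.mem_Ioc]; omega
  · intro t ht; simp only [Finset.mem_Ioc] at ht; omega
  · intro k hk; simp only [Finset.mem_range] at hk; omega
  · intro t ht; simp only [Finset.mem_Ioc] at ht; congr 1; omega

lemma sum_Ioc_reflect (h : ℕ → ℕ) (μ ℓ : ℕ) (hμ : μ ≤ ℓ) :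
    ∑ t ∈ Finset.Ioc (ℓ - μ) ℓ, h t = ∑ k ∈ Finset.range μ, h (ℓ - k) := by
  refine Finset.sum_nbij' (fun t => ℓ - t) (fun k => ℓ - k) ?_ ?_ ?_ ?_ ?_
  · intro t ht; simp only [Finset.mem_Ioc] at ht; simp only [Finset.mem_range]; omega
  · intro k hk; simp only [Finset.mem_range] at hk; simp only [Finset.mem_Ioc]; omega
  · intro t ht; simp only [Finset.mem_Ioc] at ht; omega
  · intro k hk; simp only [Finset.mem_range] at hk; omega
  · intro t ht; simp only [Finset.mem_Ioc] at ht; congr 1; omega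

end Helpers

namespace PA

variable {q L R : ℕ}

lemma count_shift (A : PA q L R) (c : ℤ → Fin q) (p : ℕ)
    (hper : ∀ x : ℤ, c (x + p) = c x) (j i : ℤ) :
    A.count c (j + p) (i + p) = A.count c j i := by
  refine A.count_congr c c ?_ ?_ ?_ (by ring)
  · exact hper j
  · intro t; have := hper (j - (L : ℤ) + ((t : ℕ) : ℤ)); rw [← this]; congr 1; ring
  · intro t; have := hper (j + 1 + ((t : ℕ) : ℤ)); rw [← this]; congr 1; ring

lemma sum_arr_eq_sum_dep (A : PA q L R) (c : ℤ → Fin q) (p : ℕ)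
    (hper : ∀ x : ℤ, c (x + p) = c x) (s : ℤ) :
    ∑ k ∈ Finset.range p, A.arr c (s + k) = ∑ k ∈ Finset.range p, A.dep c (s + k) := by
  classical
  have harr : ∀ i : ℤ, A.arr c i = ∑ d ∈ Finset.Icc (-(L:ℤ)) (R:ℤ), A.count c (i - d) i := by
    intro i
    rw [arr]
    refine Finset.sum_nbij' (fun j => i - j) (fun d => i - d) ?_ ?_ ?_ ?_ ?_
    · intro j hj; simp only [Finset.mem_Icc] at hj ⊢; omega
    · intro d hd; simp only [Finset.mem_Icc] at hd ⊢; omega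
    · intro j hj; omega
    · intro d hd; omega
    · intro j hj; congr 1; omega
  have hdep : ∀ j : ℤ, A.dep c j = ∑ d ∈ Finset.Icc (-(L:ℤ)) (R:ℤ), A.count c j (j + d) := by
    intro j
    rw [dep]
    refine Finset.sum_nbij' (fun i => i - j) (fun d => j + d) ?_ ?_ ?_ ?_ ?_
    · intro i hi; simp only [Finset.mem_Icc] at hi ⊢; omega
    · intro d hd; simp only [Finset.mem_Icc] at hd ⊢; omega
    · intro i hi; omega
    · intro d hd; omega
    · intro i hi; congr 1; omega
  simp only [harr, hdep]
  rw [Finset.sum_comm, Finset.sum_comm (s := Finset.range p)]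
  refine Finset.sum_congr rfl fun d hd => ?_
  have hφper : ∀ x : ℤ, A.count c (x + p - d) (x + p) = A.count c (x - d) x := by
    intro x
    have := A.count_shift c p hper (x - d) x
    rw [← this]; congr 1; ring
  have h1 : ∑ k ∈ Finset.range p, A.count c ((s + k) - d) (s + k)
      = ∑ k ∈ Finset.range p, A.count c (((s + d) + k) - d) ((s + d) + k) := by
    have g := sum_shift_periodic p (fun x => A.count c (x - d) x) (by intro x; exact hφper x)
    rw [g s, g (s + d)]
  rw [h1]
  refine Finset.sum_congr rfl fun k hk => ?_
  congr 1 <;> ring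

end PA


set_option maxHeartbeats 1000000 in
/-- if a conservative CA with offset `ℓ` is the global map of some
non-anticipating particle automaton (each cell `i` receives from the other cells at most
`q − 1 − c_i` particles), then `ℓ(q−1) = ∑_{i=1}^{n−1} f(0^i, (q−1)^{n−i})`. -/
theorem non_anticipating_forces_offset
    (q n : ℕ) (hq : 2 ≤ q) [NeZero q] (hn : 1 ≤ n)
    (f : (Fin n → Fin q) → Fin q) (hf : Conserves q n f)
    (ℓ : ℕ) (hℓ : ℓ ≤ n - 1)
    (F : (ℤ → Fin q) → ℤ → Fin q)
    (hF : ∀ (c : ℤ → Fin q) (i : ℤ),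
      F c i = f (fun t => c (i - (ℓ : ℤ) + ((t : ℕ) : ℤ))))
    (L R : ℕ) (G : PA q L R)
    (hglob : ∀ (c : ℤ → Fin q) (i : ℤ), G.glob c i = F c i)
    (hna : ∀ (c : ℤ → Fin q) (i : ℤ),
      (∑ᶠ j : ℤ, if j = i then 0 else G.count c j i) ≤ q - 1 - ((c i : ℕ))) :
    ℓ * (q - 1) =
      ∑ i ∈ Finset.Icc 1 (n - 1),
        ((f (fun t => if (t : ℕ) < i then (0 : Fin q) else ⟨q - 1, by omega⟩) : ℕ)) := by
  classical
  -- the state q − 1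
  set qm : Fin q := ⟨q - 1, by omega⟩ with hqm
  have hqmv : (qm : ℕ) = q - 1 := rfl
  have hℓn : ℓ < n := by omega
  -- the boundary-window values
  set Af : ℕ → ℕ := fun k => ((f (fun t => if (t : ℕ) < k then (0 : Fin q) else qm)) : ℕ)
    with hAfdef
  have hAfle : ∀ k, Af k ≤ q - 1 := by
    intro k; have := (f (fun t => if (t : ℕ) < k then (0 : Fin q) else qm)).isLt
    simp only [hAfdef]; omega
  -- constants
  set B : ℕ := L + R + n + ℓ + 2 with hB
  set P : ℕ := 3 * B with hPdef
  have hP1 : 1 ≤ P := by omega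
  -- the configuration
  set c : ℤ → Fin q := fun i => if i % (P : ℤ) < (B : ℤ) then qm else 0 with hcdef
  have hper : ∀ x : ℤ, c (x + (P : ℤ)) = c x := by
    intro x
    have e : (x + (P : ℤ)) % (P : ℤ) = x % (P : ℤ) := by
      rw [show x + (P : ℤ) = x + (P : ℤ) * 1 by ring, Int.add_mul_emod_self_left]
    simp only [hcdef, e]
  have hcv : ∀ x : ℤ, (B : ℤ) ≤ x → x < (P : ℤ) + B →
      c x = if (P : ℤ) ≤ x then qm else 0 := by
    intro x h1 h2
    simp only [hcdef]
    by_cases hx : (P : ℤ) ≤ x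
    · have e : x % (P : ℤ) = x - P := by
        rw [show x = (x - (P : ℤ)) + (P : ℤ) * 1 by ring, Int.add_mul_emod_self_left]
        rw [Int.emod_eq_of_lt (by omega) (by omega)]
        ring
      rw [e, if_pos (by omega), if_pos hx]
    · have e : x % (P : ℤ) = x := Int.emod_eq_of_lt (by omega) (by omega)
      rw [e, if_neg (by omega), if_neg hx]
  -- constant rules
  have hconst : ∀ v : Fin q, ((f (fun _ => v)) : ℕ) = (v : ℕ) := by
    intro v
    have h := hf 1 le_rfl (fun _ => v) (fun _ => rfl)
    simp only [Finset.sum_range_one] at h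
    exact_mod_cast h
  have hAf0 : Af 0 = q - 1 := by
    have : (fun t : Fin n => if (t : ℕ) < 0 then (0 : Fin q) else qm) = fun _ => qm := by
      funext t; simp
    simp only [hAfdef, this, hconst qm, hqmv]
  have hAfn : Af n = 0 := by
    have : (fun t : Fin n => if (t : ℕ) < n then (0 : Fin q) else qm) = fun _ => (0 : Fin q) := by
      funext t; simp [t.isLt]
    simp only [hAfdef, this, hconst 0]
    simp
  -- the global map never caps
  have hFarr : ∀ (c' : ℤ → Fin q) (i : ℤ), ((F c' i : ℕ)) = G.arr c' i := by
    intro c' i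
    have hv : ((G.glob c' i : ℕ)) = min (q - 1) (G.arr c' i) := by
      rw [← G.finsum_count c' i]; rfl
    have hmem : i ∈ Finset.Icc (i - (R : ℤ)) (i + (L : ℤ)) := by
      simp only [Finset.mem_Icc]; omega
    have hsplit : G.arr c' i = G.count c' i i +
        ∑ j ∈ (Finset.Icc (i - (R : ℤ)) (i + (L : ℤ))).erase i, G.count c' j i := by
      rw [PA.arr, ← Finset.add_sum_erase _ _ hmem]
    have h2 : ∑ j ∈ Finset.Icc (i - (R : ℤ)) (i + (L : ℤ)),
        (if j = i then 0 else G.count c' j i)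
        = ∑ j ∈ (Finset.Icc (i - (R : ℤ)) (i + (L : ℤ))).erase i, G.count c' j i := by
      rw [← Finset.add_sum_erase _ _ hmem, if_pos rfl, zero_add]
      exact Finset.sum_congr rfl fun j hj => if_neg (Finset.mem_erase.mp hj).1
    have h3 := hna c' i
    rw [G.finsum_count' c' i, h2] at h3
    have h4 := G.count_le c' i i
    have h5 : (c' i : ℕ) ≤ q - 1 := by have := (c' i).isLt; omega
    have h6 : G.arr c' i ≤ q - 1 := by omega
    rw [← hglob c' i, hv]; omega
  -- cells in state q−1 receive nothing from elsewhere
  have hrecv0 : ∀ (c' : ℤ → Fin q) (i : ℤ), (c' i : ℕ) = q - 1 →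
      ∀ j, j ≠ i → G.count c' j i = 0 := by
    intro c' i hci j hj
    have h3 := hna c' i
    rw [G.finsum_count' c' i, hci] at h3
    have h0 : ∑ j ∈ Finset.Icc (i - (R : ℤ)) (i + (L : ℤ)),
        (if j = i then 0 else G.count c' j i) = 0 := by omega
    by_cases hmem : j ∈ Finset.Icc (i - (R : ℤ)) (i + (L : ℤ))
    · have := Finset.sum_eq_zero_iff.mp h0 j hmem
      rwa [if_neg hj] at this
    · simp only [Finset.mem_Icc] at hmem
      exact G.count_eq_zero c' (by omega)
  -- evaluation of F on the configuration
  have hFval : ∀ i : ℤ, (B : ℤ) + ℓ ≤ i → i - ℓ + n ≤ (P : ℤ) + B →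
      ((F c i : ℕ)) = Af (((P : ℤ) + ℓ - i).toNat ⊓ n) := by
    intro i h1 h2
    have hwin : (fun t : Fin n => c (i - (ℓ : ℤ) + ((t : ℕ) : ℤ)))
        = fun t : Fin n => if (t : ℕ) < ((P : ℤ) + ℓ - i).toNat ⊓ n then (0 : Fin q) else qm := by
      funext t
      have ht := t.isLt
      rw [hcv (i - (ℓ : ℤ) + ((t : ℕ) : ℤ)) (by omega) (by omega)]
      by_cases hx : (P : ℤ) ≤ i - (ℓ : ℤ) + ((t : ℕ) : ℤ)
      · rw [if_pos hx, if_neg (by omega)]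
      · rw [if_neg hx, if_pos (by omega)]
    rw [hF, hAfdef]
    dsimp only
    rw [hwin]
  -- no particle ever vanishes (in the window [P, 2P))
  have hdag0 : ∀ j : ℤ, (P : ℤ) ≤ j → j < 2 * (P : ℤ) → G.dag c j = 0 := by
    have hFC : ∑ k ∈ Finset.range P, ((F c ((P : ℤ) + k) : ℕ))
        = ∑ k ∈ Finset.range P, ((c ((P : ℤ) + k) : ℕ)) := by
      have hwper : ∀ i : ℤ, c ((P : ℤ) - ℓ + (i + (P : ℤ))) = c ((P : ℤ) - ℓ + i) := by
        intro i
        have := hper ((P : ℤ) - ℓ + i)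
        rw [← this]; congr 1; ring
      have hZ := hf P hP1 (fun j => c ((P : ℤ) - ℓ + j)) hwper
      have e1 : ∀ k ∈ Finset.range P,
          ((f (fun t => c ((P : ℤ) - ℓ + ((k : ℤ) + ((t : ℕ) : ℤ)))) : ℤ))
          = ((F c ((P : ℤ) + k) : ℤ)) := by
        intro k _
        have ew : (fun t : Fin n => c ((P : ℤ) - ℓ + ((k : ℤ) + ((t : ℕ) : ℤ))))
            = (fun t : Fin n => c ((P : ℤ) + k - ℓ + ((t : ℕ) : ℤ))) := by
          funext t; congr 1; ring
        rw [hF, ew]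
      rw [Finset.sum_congr rfl e1] at hZ
      have e2 : ∑ k ∈ Finset.range P, ((c ((P : ℤ) - ℓ + k) : ℕ))
          = ∑ k ∈ Finset.range P, ((c ((P : ℤ) + k) : ℕ)) := by
        have g := sum_shift_periodic P (fun x => ((c x : ℕ)))
          (fun x => congrArg Fin.val (hper x))
        rw [g ((P : ℤ) - ℓ), g ((P : ℤ))]
      rw [← e2]
      exact_mod_cast hZ
    have hchain : ∑ k ∈ Finset.range P, G.dep c ((P : ℤ) + k)
        = ∑ k ∈ Finset.range P, ((c ((P : ℤ) + k) : ℕ)) := by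
      rw [← G.sum_arr_eq_sum_dep c P hper ((P : ℤ)), ← hFC]
      exact Finset.sum_congr rfl fun k _ => (hFarr c ((P : ℤ) + k)).symm
    have hdagsum : ∑ k ∈ Finset.range P, G.dag c ((P : ℤ) + k) = 0 := by
      have h4 : ∀ k ∈ Finset.range P,
          G.dep c ((P : ℤ) + k) + G.dag c ((P : ℤ) + k) = ((c ((P : ℤ) + k) : ℕ)) :=
        fun k _ => G.dep_add_dag c ((P : ℤ) + k)
      have h5 := Finset.sum_congr rfl h4
      rw [Finset.sum_add_distrib, hchain] at h5
      omega
    intro j h1 h2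
    have hk : ((j - (P : ℤ)).toNat) ∈ Finset.range P := by
      simp only [Finset.mem_range]; omega
    have := Finset.sum_eq_zero_iff.mp hdagsum _ hk
    rwa [show (P : ℤ) + ((j - (P : ℤ)).toNat : ℤ) = j by omega] at this
  -- q−1 cells keep exactly their own staying particles
  have hNself : ∀ j : ℤ, (P : ℤ) ≤ j → j < (P : ℤ) + B →
      G.count c j j = ((F c j : ℕ)) := by
    intro j h1 h2
    have hcj : ((c j : ℕ)) = q - 1 := by
      rw [hcv j (by omega) (by omega), if_pos h1]
    rw [hFarr c j, PA.arr]
    exact (Finset.sum_eq_single_of_mem j (by simp only [Finset.mem_Icc]; omega)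
      (fun j' _ hne => hrecv0 c j hcj j' hne)).symm
  -- deep q−1 boundary cells have forced window values
  have hAfq : ∀ t : ℕ, 1 ≤ t → t + L ≤ ℓ → Af t = q - 1 := by
    intro t ht1 ht2
    set j : ℤ := (P : ℤ) + ℓ - t with hj
    have hcj : ((c j : ℕ)) = q - 1 := by
      rw [hcv j (by omega) (by omega), if_pos (by omega)]
    have hdep : G.dep c j = G.count c j j := by
      rw [PA.dep]
      refine Finset.sum_eq_single_of_mem j (by simp only [Finset.mem_Icc]; omega) ?_
      intro i hi hne
      have hci : ((c i : ℕ)) = q - 1 := by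
        simp only [Finset.mem_Icc] at hi
        rw [hcv i (by omega) (by omega), if_pos (by omega)]
      exact hrecv0 c i hci j (by omega)
    have hdd := G.dep_add_dag c j
    rw [hdag0 j (by omega) (by omega), hdep, hcj] at hdd
    have hNs := hNself j (by omega) (by omega)
    have hFv := hFval j (by omega) (by omega)
    rw [show (((P : ℤ) + ℓ - j).toNat ⊓ n) = t by omega] at hFv
    omega
  -- per-sender accounting for the boundary senders
  have hInner : ∀ j : ℤ, (P : ℤ) ≤ j → j < (P : ℤ) + L →
      ∑ k ∈ Finset.range B, G.count c j ((P : ℤ) - B + k)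
        = (q - 1) - ((F c j : ℕ)) := by
    intro j h1 h2
    have hcj : ((c j : ℕ)) = q - 1 := by
      rw [hcv j (by omega) (by omega), if_pos h1]
    have hsp : G.dep c j = G.count c j j +
        ∑ i ∈ Finset.Ico ((P : ℤ) - B) ((P : ℤ)), G.count c j i := by
      rw [PA.dep, ← Finset.add_sum_erase _ _
        (show j ∈ Finset.Icc (j - (L : ℤ)) (j + (R : ℤ)) by simp only [Finset.mem_Icc]; omega)]
      congr 1
      apply sum_eq_sum_of_zero_off
      · intro x hx hxo
        have hxe := Finset.mem_erase.mp hx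
        simp only [Finset.mem_Icc] at hxe
        simp only [Finset.mem_Ico] at hxo
        have hcx : ((c x : ℕ)) = q - 1 := by
          rw [hcv x (by omega) (by omega), if_pos (by omega)]
        exact hrecv0 c x hcx j (by omega)
      · intro x hx hxo
        simp only [Finset.mem_Ico] at hx
        by_cases hmem : x ∈ Finset.Icc (j - (L : ℤ)) (j + (R : ℤ))
        · exact absurd (Finset.mem_erase.mpr ⟨by omega, hmem⟩) hxo
        · simp only [Finset.mem_Icc] at hmem
          exact G.count_eq_zero c (by omega)
    have hIco : ∑ i ∈ Finset.Ico ((P : ℤ) - B) ((P : ℤ)), G.count c j i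
        = ∑ k ∈ Finset.range B, G.count c j ((P : ℤ) - B + k) := by
      have h0 := sum_Ico_int (fun i => G.count c j i) ((P : ℤ) - B) B
      rw [show ((P : ℤ) - B + (B : ℕ) : ℤ) = (P : ℤ) by push_cast; ring] at h0
      exact h0
    have hdd := G.dep_add_dag c j
    rw [hdag0 j (by omega) (by omega), hcj, hsp, hIco,
      hNself j (by omega) (by omega)] at hdd
    have hFle : ((F c j : ℕ)) ≤ q - 1 := by have := (F c j).isLt; omega
    omega
  -- the segment sum, counted two ways
  set S : ℕ := ∑ k ∈ Finset.range B, ((F c ((P : ℤ) - B + k) : ℕ)) with hS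
  -- first way : via the local rule
  have hSa : S = ∑ t ∈ Finset.Ioc ℓ (n - 1), Af t := by
    have e1 : ∀ k ∈ Finset.range B,
        ((F c ((P : ℤ) - B + k) : ℕ)) = Af ((B + ℓ - k) ⊓ n) := by
      intro k hk
      simp only [Finset.mem_range] at hk
      rw [hFval ((P : ℤ) - B + k) (by omega) (by omega)]
      congr 1
      omega
    rw [hS, Finset.sum_congr rfl e1, ← Finset.sum_range_reflect]
    have e2 : ∀ k ∈ Finset.range B,
        Af ((B + ℓ - (B - 1 - k)) ⊓ n) = Af ((ℓ + 1 + k) ⊓ n) := by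
      intro k hk
      simp only [Finset.mem_range] at hk
      congr 1
      omega
    rw [Finset.sum_congr rfl e2]
    rw [sum_Ioc_eq_range Af ℓ (n - 1)]
    rw [← Finset.sum_subset (show Finset.range (n - 1 - ℓ) ⊆ Finset.range B by
        apply Finset.range_subset_range.mpr; omega)
      (by
        intro k _ hk2
        simp only [Finset.mem_range] at hk2
        rw [show (ℓ + 1 + k) ⊓ n = n by omega]
        exact hAfn)]
    refine Finset.sum_congr rfl fun k hk => ?_
    simp only [Finset.mem_range] at hk
    congr 1
    omega
  -- second way : via particles
  have hSb : S = ∑ t ∈ Finset.Ioc 0 ℓ, ((q - 1) - Af t) := by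
    have e1 : ∀ k ∈ Finset.range B,
        ((F c ((P : ℤ) - B + k) : ℕ))
          = ∑ j ∈ Finset.Ico ((P : ℤ)) ((P : ℤ) + L), G.count c j ((P : ℤ) - B + k) := by
      intro k hk
      simp only [Finset.mem_range] at hk
      rw [hFarr, PA.arr]
      apply sum_eq_sum_of_zero_off
      · intro x hx hxo
        simp only [Finset.mem_Icc] at hx
        simp only [Finset.mem_Ico] at hxo
        have hcx : ((c x : ℕ)) = 0 := by
          rw [hcv x (by omega) (by omega), if_neg (by omega)]
          simp
        have := G.count_le c x ((P : ℤ) - B + k)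
        omega
      · intro x hx hxo
        simp only [Finset.mem_Ico] at hx
        by_cases hmem : x ∈ Finset.Icc (((P : ℤ) - B + k) - (R : ℤ)) (((P : ℤ) - B + k) + (L : ℤ))
        · exact absurd hmem hxo
        · simp only [Finset.mem_Icc] at hmem
          exact G.count_eq_zero c (by omega)
    rw [hS, Finset.sum_congr rfl e1, Finset.sum_comm]
    have e2 : ∀ j ∈ Finset.Ico ((P : ℤ)) ((P : ℤ) + L),
        ∑ k ∈ Finset.range B, G.count c j ((P : ℤ) - B + k)
          = (q - 1) - ((F c j : ℕ)) := by
      intro j hj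
      simp only [Finset.mem_Ico] at hj
      exact hInner j hj.1 hj.2
    rw [Finset.sum_congr rfl e2]
    have hIco2 : ∑ j ∈ Finset.Ico ((P : ℤ)) ((P : ℤ) + L), ((q - 1) - ((F c j : ℕ)))
        = ∑ k ∈ Finset.range L, ((q - 1) - ((F c ((P : ℤ) + k) : ℕ))) := by
      exact sum_Ico_int (fun j' => (q - 1) - ((F c j' : ℕ))) ((P : ℤ)) L
    rw [hIco2]
    have e3 : ∀ k ∈ Finset.range L,
        (q - 1) - ((F c ((P : ℤ) + k) : ℕ))
          = (if k < ℓ then (q - 1) - Af (ℓ - k) else 0) := by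
      intro k hk
      simp only [Finset.mem_range] at hk
      rw [hFval ((P : ℤ) + k) (by omega) (by omega)]
      by_cases hkℓ : k < ℓ
      · rw [if_pos hkℓ]
        congr 2
        omega
      · rw [if_neg hkℓ, show (((P : ℤ) + ℓ - ((P : ℤ) + k)).toNat ⊓ n) = 0 by omega, hAf0]
        omega
    rw [Finset.sum_congr rfl e3]
    -- trim to the first min L ℓ terms
    have e4 : ∑ k ∈ Finset.range L, (if k < ℓ then (q - 1) - Af (ℓ - k) else 0)
        = ∑ k ∈ Finset.range ((min L ℓ)), ((q - 1) - Af (ℓ - k)) := by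
      rw [← Finset.sum_subset (show Finset.range ((min L ℓ)) ⊆ Finset.range L by
          apply Finset.range_subset_range.mpr; omega)
        (by
          intro k hk hk2
          simp only [Finset.mem_range] at hk hk2
          rw [if_neg (by omega)])]
      refine Finset.sum_congr rfl fun k hk => ?_
      simp only [Finset.mem_range] at hk
      rw [if_pos (by omega)]
    have hcase : (min L ℓ = L ∧ L ≤ ℓ) ∨ (min L ℓ = ℓ ∧ ℓ ≤ L) := by
      rcases le_total L ℓ with h | h
      · exact Or.inl ⟨min_eq_left h, h⟩
      · exact Or.inr ⟨min_eq_right h, h⟩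
    have e5 : ∑ k ∈ Finset.range (min L ℓ), ((q - 1) - Af (ℓ - k))
        = ∑ k ∈ Finset.range ℓ, ((q - 1) - Af (ℓ - k)) := by
      apply Finset.sum_subset (Finset.range_subset_range.mpr (Nat.min_le_right L ℓ))
      intro k hk hk2
      simp only [Finset.mem_range] at hk hk2
      have hge : min L ℓ ≤ k := by omega
      have hLk : L ≤ k := by
        rcases hcase with ⟨he, _⟩ | ⟨he, _⟩
        · rw [he] at hge; exact hge
        · rw [he] at hge; omega
      rw [hAfq (ℓ - k) (by omega) (by omega)]
      omega
    rw [e4, e5, ← sum_Ioc_reflect (fun t => (q - 1) - Af t) ℓ ℓ le_rfl, Nat.sub_self]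
  -- conclusion
  have hgoal : ∑ i ∈ Finset.Icc 1 (n - 1),
      ((f (fun t => if (t : ℕ) < i then (0 : Fin q) else ⟨q - 1, by omega⟩) : ℕ))
      = ∑ i ∈ Finset.Icc 1 (n - 1), Af i := by
    refine Finset.sum_congr rfl fun i _ => rfl
  rw [hgoal, show Finset.Icc 1 (n - 1) = Finset.Ioc 0 (n - 1) from (Finset.Icc_add_one_left_eq_Ioc 0 (n-1))]
  rw [← Finset.sum_Ioc_consecutive _ (Nat.zero_le ℓ) hℓ]
  have hsum1 : ∑ t ∈ Finset.Ioc 0 ℓ, (((q - 1) - Af t) + Af t)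
      = ∑ t ∈ Finset.Ioc 0 ℓ, (q - 1) := by
    refine Finset.sum_congr rfl fun t _ => ?_
    have := hAfle t
    omega
  rw [Finset.sum_const, Nat.card_Ioc, Nat.sub_zero, smul_eq_mul] at hsum1
  rw [Finset.sum_add_distrib] at hsum1
  rw [← hSb, hSa] at hsum1
  omega
end
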